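/- arXiv:2402.09287 — 6 statements merged into one kernel-verified Lean document; each statement's English description precedes it below -/
import Mathlib

section
/- For every n ≥ 1 and f ∈ L²[0,1], (Re Vⁿ)f(x) = (1/2)∫₀¹ |x−t|^{n−1}/(n−1)! · f(t) dt for almost every x ∈ [0,1], where Re Vⁿ := (Vⁿ + V*ⁿ)/2. -/
open MeasureTheory Complex ContinuousLinearMap

noncomputable section

abbrev E : Type := Lp ℂ 2 (volume.restrict (Set.Icc (0:ℝ) 1))

def IsVolterra (V : E →L[ℂ] E) : Prop :=
  ∀ f : E, ∀ᵐ x ∂(volume.restrict (Set.Icc (0:ℝ) 1)),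
    (V f : ℝ → ℂ) x = ∫ t in (0:ℝ)..x, (f : ℝ → ℂ) t

open Set Nat in
instance factIcc : Fact (volume (Set.Icc (0:ℝ) 1) < ⊤) := ⟨by simp⟩

lemma integrable_of_E (f : E) : Integrable (f : ℝ → ℂ) (volume.restrict (Set.Icc (0:ℝ) 1)) :=
  (Lp.memLp f).integrable (by norm_num)

open Set Nat

lemma triangle_lower (n : ℕ) (f : ℝ → ℂ) (x : ℝ) (hx0 : 0 ≤ x) (hx1 : x ≤ 1)
    (hf : Integrable f (volume.restrict (Set.Ioc 0 x))) :
    ∫ t in Set.Ioc (0:ℝ) x, ∫ s in Set.Ioc (0:ℝ) t, (((t-s)^n : ℝ) : ℂ)/(n ! : ℂ) * f s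
      = ∫ s in Set.Ioc (0:ℝ) x, (((x-s)^(n+1) : ℝ) : ℂ)/((n+1)! : ℂ) * f s := by
  set ν := volume.restrict (Set.Ioc (0:ℝ) x) with hν
  set S : Set (ℝ × ℝ) := {p : ℝ × ℝ | p.2 ∈ Set.Ioc 0 p.1} with hS
  have hSm : MeasurableSet S := by
    have : S = {p : ℝ × ℝ | 0 < p.2} ∩ {p : ℝ × ℝ | p.2 ≤ p.1} := by
      ext p; simp [hS, Set.mem_Ioc, and_comm]
    rw [this]
    exact (measurableSet_lt measurable_const measurable_snd).inter
      (measurableSet_le measurable_snd measurable_fst)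
  set F : ℝ × ℝ → ℂ := S.indicator (fun p => (((p.1-p.2)^n : ℝ) : ℂ)/(n ! : ℂ) * f p.2) with hF
  have hprod : ν.prod ν = (volume.prod volume).restrict ((Set.Ioc (0:ℝ) x) ×ˢ (Set.Ioc (0:ℝ) x)) := by
    rw [hν, Measure.prod_restrict]
  have haemem : ∀ᵐ p ∂(ν.prod ν), p ∈ (Set.Ioc (0:ℝ) x) ×ˢ (Set.Ioc (0:ℝ) x) := by
    rw [hprod]; exact ae_restrict_mem (measurableSet_Ioc.prod measurableSet_Ioc)
  have hFmeas : AEStronglyMeasurable F (ν.prod ν) := by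
    apply AEStronglyMeasurable.indicator _ hSm
    exact ((Continuous.aestronglyMeasurable (by continuity :
      Continuous (fun p : ℝ × ℝ => (((p.1-p.2)^n : ℝ) : ℂ)/(n ! : ℂ)))).mul hf.1.comp_snd)
  have hFint : Integrable F (ν.prod ν) := by
    apply Integrable.mono' ((integrable_const (((n ! : ℕ) : ℝ)⁻¹)).mul_prod hf.norm) hFmeas
    filter_upwards [haemem] with p hp
    rw [hF]
    by_cases hmem : p ∈ S
    · rw [Set.indicator_of_mem hmem]
      have hab : |((p.1-p.2)^n : ℝ)| ≤ 1 := by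
        rw [_root_.abs_pow]
        apply pow_le_one₀ (abs_nonneg _)
        rw [abs_le]
        have h1 := hmem.1
        have h2 := hmem.2
        have h3 := hp.1.2
        constructor <;> nlinarith
      have h1 : ‖(((p.1-p.2)^n : ℝ) : ℂ)/(n ! : ℂ)‖ ≤ ((n ! : ℕ) : ℝ)⁻¹ := by
        rw [norm_div, Complex.norm_real, Complex.norm_natCast, Real.norm_eq_abs, div_eq_mul_inv]
        calc |(p.1-p.2)^n| * ((n ! : ℕ) : ℝ)⁻¹ ≤ 1 * ((n ! : ℕ) : ℝ)⁻¹ :=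
              mul_le_mul_of_nonneg_right hab (by positivity)
          _ = _ := one_mul _
      rw [norm_mul]
      exact mul_le_mul_of_nonneg_right h1 (norm_nonneg _)
    · rw [Set.indicator_of_notMem hmem]
      simp only [norm_zero]
      positivity
  have step1 : (∫ t, (∫ s in Set.Ioc (0:ℝ) t, (((t-s)^n : ℝ) : ℂ)/(n ! : ℂ) * f s) ∂ν)
      = ∫ t, (∫ s, F (t, s) ∂ν) ∂ν := by
    apply integral_congr_ae
    rw [hν]
    filter_upwards [ae_restrict_mem measurableSet_Ioc] with t ht
    have hpt : ∀ s : ℝ, F (t, s) = (Set.Ioc (0:ℝ) t).indicator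
        (fun s => (((t-s)^n : ℝ) : ℂ)/(n ! : ℂ) * f s) s := by
      intro s
      rw [hF]
      by_cases h : s ∈ Set.Ioc (0:ℝ) t
      · rw [Set.indicator_of_mem (show (t,s) ∈ S from h), Set.indicator_of_mem h]
      · rw [Set.indicator_of_notMem (show (t,s) ∉ S from h), Set.indicator_of_notMem h]
    rw [show (fun s => F (t, s)) = (Set.Ioc (0:ℝ) t).indicator
        (fun s => (((t-s)^n : ℝ) : ℂ)/(n ! : ℂ) * f s) from funext hpt]
    rw [setIntegral_indicator measurableSet_Ioc]
    rw [Set.Ioc_inter_Ioc, max_self, min_eq_right ht.2]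
  have step3 : (∫ s, (∫ t, F (t, s) ∂ν) ∂ν)
      = ∫ s, (((x-s)^(n+1) : ℝ) : ℂ)/((n+1)! : ℂ) * f s ∂ν := by
    apply integral_congr_ae
    rw [hν]
    filter_upwards [ae_restrict_mem measurableSet_Ioc] with s hs
    have hpt : ∀ t : ℝ, F (t, s) = (Set.Ici s).indicator
        (fun t => (((t-s)^n : ℝ) : ℂ)/(n ! : ℂ) * f s) t := by
      intro t
      rw [hF]
      by_cases h : s ≤ t
      · rw [Set.indicator_of_mem (show (t,s) ∈ S from ⟨hs.1, h⟩),
          Set.indicator_of_mem (Set.mem_Ici.mpr h)]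
      · rw [Set.indicator_of_notMem (show (t,s) ∉ S from fun hm => h hm.2),
          Set.indicator_of_notMem (fun hm => h (Set.mem_Ici.mp hm))]
    rw [show (fun t => F (t, s)) = (Set.Ici s).indicator
        (fun t => (((t-s)^n : ℝ) : ℂ)/(n ! : ℂ) * f s) from funext hpt]
    rw [setIntegral_indicator measurableSet_Ici]
    have hset : Set.Ioc 0 x ∩ Set.Ici s = Set.Icc s x := by
      ext t
      simp only [Set.mem_inter_iff, Set.mem_Ioc, Set.mem_Icc, Set.mem_Ici]
      constructor
      · rintro ⟨⟨_, h2⟩, h3⟩; exact ⟨h3, h2⟩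
      · rintro ⟨h3, h2⟩; exact ⟨⟨lt_of_lt_of_le hs.1 h3, h2⟩, h3⟩
    rw [hset, integral_Icc_eq_integral_Ioc]
    simp_rw [div_eq_mul_inv, mul_assoc]
    rw [MeasureTheory.integral_mul_const]
    have hval : ∫ t in Set.Ioc s x, (((t-s)^n : ℝ) : ℂ) = (((x-s)^(n+1)/(n+1) : ℝ) : ℂ) := by
      rw [← intervalIntegral.integral_of_le hs.2]
      rw [intervalIntegral.integral_ofReal (f := fun t => (t - s)^n)]
      congr 1
      rw [intervalIntegral.integral_comp_sub_right (fun u => u^n) s, sub_self, integral_pow]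
      rw [zero_pow (Nat.succ_ne_zero n)]
      ring
    rw [hval]
    have hne : ((n ! : ℕ) : ℂ) ≠ 0 := by
      exact_mod_cast Nat.cast_ne_zero.mpr (Nat.factorial_ne_zero n)
    have hne2 : (((n+1) ! : ℕ) : ℂ) ≠ 0 := by
      exact_mod_cast Nat.cast_ne_zero.mpr (Nat.factorial_ne_zero (n+1))
    have hn1 : ((n : ℂ) + 1) ≠ 0 := Nat.cast_add_one_ne_zero n
    push_cast
    rw [Nat.factorial_succ]
    push_cast
    field_simp
    try ring
  calc (∫ t, (∫ s in Set.Ioc (0:ℝ) t, (((t-s)^n : ℝ) : ℂ)/(n ! : ℂ) * f s) ∂ν)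
      = ∫ t, (∫ s, F (t, s) ∂ν) ∂ν := step1
    _ = ∫ s, (∫ t, F (t, s) ∂ν) ∂ν := integral_integral_swap hFint
    _ = ∫ s, (((x-s)^(n+1) : ℝ) : ℂ)/((n+1)! : ℂ) * f s ∂ν := step3

lemma triangle_upper (n : ℕ) (f : ℝ → ℂ) (x : ℝ) (hx0 : 0 ≤ x) (hx1 : x ≤ 1)
    (hf : Integrable f (volume.restrict (Set.Ioc x 1))) :
    ∫ t in Set.Ioc x (1:ℝ), ∫ s in Set.Ioc t (1:ℝ), (((s-t)^n : ℝ) : ℂ)/(n ! : ℂ) * f s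
      = ∫ s in Set.Ioc x (1:ℝ), (((s-x)^(n+1) : ℝ) : ℂ)/((n+1)! : ℂ) * f s := by
  set ν := volume.restrict (Set.Ioc x (1:ℝ)) with hν
  set S : Set (ℝ × ℝ) := {p : ℝ × ℝ | p.2 ∈ Set.Ioc p.1 1} with hS
  have hSm : MeasurableSet S := by
    have : S = {p : ℝ × ℝ | p.1 < p.2} ∩ {p : ℝ × ℝ | p.2 ≤ 1} := by
      ext p; simp [hS, Set.mem_Ioc]
    rw [this]
    exact (measurableSet_lt measurable_fst measurable_snd).inter
      (measurableSet_le measurable_snd measurable_const)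
  set F : ℝ × ℝ → ℂ := S.indicator (fun p => (((p.2-p.1)^n : ℝ) : ℂ)/(n ! : ℂ) * f p.2) with hF
  have hprod : ν.prod ν = (volume.prod volume).restrict ((Set.Ioc x (1:ℝ)) ×ˢ (Set.Ioc x (1:ℝ))) := by
    rw [hν, Measure.prod_restrict]
  have haemem : ∀ᵐ p ∂(ν.prod ν), p ∈ (Set.Ioc x (1:ℝ)) ×ˢ (Set.Ioc x (1:ℝ)) := by
    rw [hprod]; exact ae_restrict_mem (measurableSet_Ioc.prod measurableSet_Ioc)
  have hFmeas : AEStronglyMeasurable F (ν.prod ν) := by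
    apply AEStronglyMeasurable.indicator _ hSm
    exact ((Continuous.aestronglyMeasurable (by continuity :
      Continuous (fun p : ℝ × ℝ => (((p.2-p.1)^n : ℝ) : ℂ)/(n ! : ℂ)))).mul hf.1.comp_snd)
  have hFint : Integrable F (ν.prod ν) := by
    apply Integrable.mono' ((integrable_const (((n ! : ℕ) : ℝ)⁻¹)).mul_prod hf.norm) hFmeas
    filter_upwards [haemem] with p hp
    rw [hF]
    by_cases hmem : p ∈ S
    · rw [Set.indicator_of_mem hmem]
      have hab : |((p.2-p.1)^n : ℝ)| ≤ 1 := by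
        rw [_root_.abs_pow]
        apply pow_le_one₀ (abs_nonneg _)
        rw [abs_le]
        have h1 := hmem.1
        have h2 := hmem.2
        have h3 := hp.1.1
        constructor <;> nlinarith
      have h1 : ‖(((p.2-p.1)^n : ℝ) : ℂ)/(n ! : ℂ)‖ ≤ ((n ! : ℕ) : ℝ)⁻¹ := by
        rw [norm_div, Complex.norm_real, Complex.norm_natCast, Real.norm_eq_abs, div_eq_mul_inv]
        calc |(p.2-p.1)^n| * ((n ! : ℕ) : ℝ)⁻¹ ≤ 1 * ((n ! : ℕ) : ℝ)⁻¹ :=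
              mul_le_mul_of_nonneg_right hab (by positivity)
          _ = _ := one_mul _
      rw [norm_mul]
      exact mul_le_mul_of_nonneg_right h1 (norm_nonneg _)
    · rw [Set.indicator_of_notMem hmem]
      simp only [norm_zero]
      positivity
  have step1 : (∫ t, (∫ s in Set.Ioc t (1:ℝ), (((s-t)^n : ℝ) : ℂ)/(n ! : ℂ) * f s) ∂ν)
      = ∫ t, (∫ s, F (t, s) ∂ν) ∂ν := by
    apply integral_congr_ae
    rw [hν]
    filter_upwards [ae_restrict_mem measurableSet_Ioc] with t ht
    have hpt : ∀ s : ℝ, F (t, s) = (Set.Ioc t (1:ℝ)).indicator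
        (fun s => (((s-t)^n : ℝ) : ℂ)/(n ! : ℂ) * f s) s := by
      intro s
      rw [hF]
      by_cases h : s ∈ Set.Ioc t (1:ℝ)
      · rw [Set.indicator_of_mem (show (t,s) ∈ S from h), Set.indicator_of_mem h]
      · rw [Set.indicator_of_notMem (show (t,s) ∉ S from h), Set.indicator_of_notMem h]
    rw [show (fun s => F (t, s)) = (Set.Ioc t (1:ℝ)).indicator
        (fun s => (((s-t)^n : ℝ) : ℂ)/(n ! : ℂ) * f s) from funext hpt]
    rw [setIntegral_indicator measurableSet_Ioc]
    rw [Set.Ioc_inter_Ioc, min_self, max_eq_right ht.1.le]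
  have step3 : (∫ s, (∫ t, F (t, s) ∂ν) ∂ν)
      = ∫ s, (((s-x)^(n+1) : ℝ) : ℂ)/((n+1)! : ℂ) * f s ∂ν := by
    apply integral_congr_ae
    rw [hν]
    filter_upwards [ae_restrict_mem measurableSet_Ioc] with s hs
    have hpt : ∀ t : ℝ, F (t, s) = (Set.Iio s).indicator
        (fun t => (((s-t)^n : ℝ) : ℂ)/(n ! : ℂ) * f s) t := by
      intro t
      rw [hF]
      by_cases h : t < s
      · rw [Set.indicator_of_mem (show (t,s) ∈ S from ⟨h, hs.2⟩),
          Set.indicator_of_mem (Set.mem_Iio.mpr h)]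
      · rw [Set.indicator_of_notMem (show (t,s) ∉ S from fun hm => h hm.1),
          Set.indicator_of_notMem (fun hm => h (Set.mem_Iio.mp hm))]
    rw [show (fun t => F (t, s)) = (Set.Iio s).indicator
        (fun t => (((s-t)^n : ℝ) : ℂ)/(n ! : ℂ) * f s) from funext hpt]
    rw [setIntegral_indicator measurableSet_Iio]
    have hset : Set.Ioc x (1:ℝ) ∩ Set.Iio s = Set.Ioo x s := by
      ext t
      simp only [Set.mem_inter_iff, Set.mem_Ioc, Set.mem_Ioo, Set.mem_Iio]
      constructor
      · rintro ⟨⟨h1, _⟩, h3⟩; exact ⟨h1, h3⟩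
      · rintro ⟨h1, h3⟩; exact ⟨⟨h1, le_trans h3.le hs.2⟩, h3⟩
    rw [hset, ← integral_Ioc_eq_integral_Ioo]
    simp_rw [div_eq_mul_inv, mul_assoc]
    rw [MeasureTheory.integral_mul_const]
    have hval : ∫ t in Set.Ioc x s, (((s-t)^n : ℝ) : ℂ) = (((s-x)^(n+1)/(n+1) : ℝ) : ℂ) := by
      rw [← intervalIntegral.integral_of_le hs.1.le]
      rw [intervalIntegral.integral_ofReal (f := fun t => (s - t)^n)]
      congr 1
      rw [intervalIntegral.integral_comp_sub_left (fun u => u^n) s, sub_self, integral_pow]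
      rw [zero_pow (Nat.succ_ne_zero n)]
      ring
    rw [hval]
    have hne : ((n ! : ℕ) : ℂ) ≠ 0 := by
      exact_mod_cast Nat.cast_ne_zero.mpr (Nat.factorial_ne_zero n)
    have hne2 : (((n+1) ! : ℕ) : ℂ) ≠ 0 := by
      exact_mod_cast Nat.cast_ne_zero.mpr (Nat.factorial_ne_zero (n+1))
    have hn1 : ((n : ℂ) + 1) ≠ 0 := Nat.cast_add_one_ne_zero n
    push_cast
    rw [Nat.factorial_succ]
    push_cast
    field_simp
    try ring
  calc (∫ t, (∫ s in Set.Ioc t (1:ℝ), (((s-t)^n : ℝ) : ℂ)/(n ! : ℂ) * f s) ∂ν)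
      = ∫ t, (∫ s, F (t, s) ∂ν) ∂ν := step1
    _ = ∫ s, (∫ t, F (t, s) ∂ν) ∂ν := integral_integral_swap hFint
    _ = ∫ s, (((s-x)^(n+1) : ℝ) : ℂ)/((n+1)! : ℂ) * f s ∂ν := step3

lemma adj_formula (V : E →L[ℂ] E) (hV : IsVolterra V) (g : E) :
    ∀ᵐ x ∂(volume.restrict (Set.Icc (0:ℝ) 1)),
      ((adjoint V) g : ℝ → ℂ) x = ∫ s in Set.Ioc x (1:ℝ), (g : ℝ → ℂ) s := by
  set μ := volume.restrict (Set.Icc (0:ℝ) 1) with hμ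
  set g' : ℝ → ℂ := (g : ℝ → ℂ) with hg'
  have hg_int : Integrable g' μ := integrable_of_E g
  set g'' : ℝ → ℂ := (Set.Icc (0:ℝ) 1).indicator g' with hg''
  have hg''_int : Integrable g'' volume := by
    rw [hg'', integrable_indicator_iff measurableSet_Icc]
    exact hg_int
  set G : ℝ → ℂ := fun y => ∫ s in y..(1:ℝ), g'' s with hG
  have hGcont : Continuous G := by
    have hii : ∀ a b : ℝ, IntervalIntegrable g'' volume a b :=
      fun a b => hg''_int.intervalIntegrable
    have : G = fun y => -∫ s in (1:ℝ)..y, g'' s := by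
      funext y; rw [hG]; exact (intervalIntegral.integral_symm _ _)
    rw [this]
    exact (intervalIntegral.continuous_primitive hii 1).neg
  have hGicc : ∀ y ∈ Set.Icc (0:ℝ) 1, G y = ∫ s in Set.Ioc y (1:ℝ), g' s := by
    intro y hy
    rw [hG]
    simp only
    rw [intervalIntegral.integral_of_le hy.2]
    apply setIntegral_congr_fun measurableSet_Ioc
    intro s hs
    exact Set.indicator_of_mem (show s ∈ Set.Icc (0:ℝ) 1 from ⟨le_trans hy.1 hs.1.le, hs.2⟩) g'
  have hGmem : MemLp G 2 μ := by
    apply MemLp.of_bound hGcont.aestronglyMeasurable (∫ s, ‖g'' s‖)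
    apply Filter.Eventually.of_forall
    intro y
    calc ‖G y‖ ≤ ∫ s in Set.uIoc y 1, ‖g'' s‖ :=
          intervalIntegral.norm_integral_le_integral_norm_uIoc
      _ ≤ ∫ s, ‖g'' s‖ := setIntegral_le_integral hg''_int.norm
          (Filter.Eventually.of_forall fun s => norm_nonneg _)
  set wg : E := hGmem.toLp G with hwg
  have key : (adjoint V) g = wg := by
    apply ext_inner_left ℂ
    intro f
    rw [adjoint_inner_right, L2.inner_def, L2.inner_def]
    simp only [RCLike.inner_apply]
    set f' : ℝ → ℂ := (f : ℝ → ℂ) with hf'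
    have hf_int : Integrable f' μ := integrable_of_E f
    set S : Set (ℝ × ℝ) := {p : ℝ × ℝ | p.2 ∈ Set.Ioc 0 p.1} with hS
    have hSm : MeasurableSet S := by
      have : S = {p : ℝ × ℝ | 0 < p.2} ∩ {p : ℝ × ℝ | p.2 ≤ p.1} := by
        ext p; simp [hS, Set.mem_Ioc, and_comm]
      rw [this]
      exact (measurableSet_lt measurable_const measurable_snd).inter
        (measurableSet_le measurable_snd measurable_fst)
    set H : ℝ × ℝ → ℂ := S.indicator (fun p => (starRingEnd ℂ) (f' p.2) * g' p.1) with hH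
    have hHmeas : AEStronglyMeasurable H (μ.prod μ) := by
      apply AEStronglyMeasurable.indicator _ hSm
      exact ((Complex.continuous_conj.comp_aestronglyMeasurable
        (Lp.aestronglyMeasurable f)).comp_snd.mul (Lp.aestronglyMeasurable g).comp_fst)
    have hHint : Integrable H (μ.prod μ) := by
      apply Integrable.mono' (hg_int.norm.mul_prod hf_int.norm) hHmeas
      apply Filter.Eventually.of_forall
      intro p
      calc ‖H p‖ ≤ ‖(starRingEnd ℂ) (f' p.2) * g' p.1‖ := by
            rw [hH]; exact norm_indicator_le_norm_self _ p
        _ = ‖g' p.1‖ * ‖f' p.2‖ := by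
            rw [norm_mul, RCLike.norm_conj, mul_comm]
    have lhs_eq : (∫ x, (starRingEnd ℂ) ((V f : ℝ → ℂ) x) * g' x ∂μ)
        = ∫ x, (∫ t, H (x, t) ∂μ) ∂μ := by
      apply integral_congr_ae
      filter_upwards [hV f, ae_restrict_mem measurableSet_Icc] with x hx hxmem
      rw [hx, intervalIntegral.integral_of_le hxmem.1, ← integral_conj]
      have hres : μ.restrict (Set.Ioc 0 x) = volume.restrict (Set.Ioc 0 x) := by
        rw [hμ, Measure.restrict_restrict measurableSet_Ioc,
          Set.inter_eq_left.mpr (Set.Ioc_subset_Icc_self.trans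
            (Set.Icc_subset_Icc le_rfl hxmem.2))]
      rw [← hres, ← integral_indicator measurableSet_Ioc, ← MeasureTheory.integral_mul_const]
      apply integral_congr_ae
      apply Filter.Eventually.of_forall
      intro t
      by_cases h : t ∈ Set.Ioc (0:ℝ) x
      · simp only [hH, hf', Set.indicator_of_mem h, Set.indicator_of_mem (show (x,t) ∈ S from h)]
      · simp only [hH, Set.indicator_of_notMem h,
          Set.indicator_of_notMem (show (x,t) ∉ S from h), zero_mul]
    have rhs_eq : (∫ t, (starRingEnd ℂ) (f' t) * ((wg : ℝ → ℂ) t) ∂μ)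
        = ∫ t, (∫ x, H (x, t) ∂μ) ∂μ := by
      have h0 : ∀ᵐ t : ℝ ∂μ, t ≠ 0 := by
        apply ae_restrict_of_ae
        rw [ae_iff]
        simpa using measure_singleton (0:ℝ)
      apply integral_congr_ae
      filter_upwards [ae_restrict_mem measurableSet_Icc, h0,
        hGmem.coeFn_toLp] with t htmem ht0 hcoe
      have ht_pos : 0 < t := lt_of_le_of_ne htmem.1 (Ne.symm ht0)
      have hpt : ∀ x : ℝ, H (x, t) = (Set.Ici t).indicator
          (fun x => (starRingEnd ℂ) (f' t) * g' x) x := by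
        intro x
        rw [hH]
        by_cases h : t ≤ x
        · rw [Set.indicator_of_mem (show (x,t) ∈ S from ⟨ht_pos, h⟩),
            Set.indicator_of_mem (Set.mem_Ici.mpr h)]
        · rw [Set.indicator_of_notMem (show (x,t) ∉ S from fun hm => h hm.2),
            Set.indicator_of_notMem (fun hm => h (Set.mem_Ici.mp hm))]
      rw [show (fun x => H (x, t)) = (Set.Ici t).indicator
          (fun x => (starRingEnd ℂ) (f' t) * g' x) from funext hpt]
      rw [integral_indicator measurableSet_Ici]
      have hres : μ.restrict (Set.Ici t) = volume.restrict (Set.Icc t 1) := by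
        rw [hμ, Measure.restrict_restrict measurableSet_Ici]
        congr 1
        ext u
        simp only [Set.mem_inter_iff, Set.mem_Ici, Set.mem_Icc]
        constructor
        · rintro ⟨h1, _, h3⟩; exact ⟨h1, h3⟩
        · rintro ⟨h1, h3⟩; exact ⟨h1, le_trans htmem.1 h1, h3⟩
      rw [hres, MeasureTheory.integral_const_mul, integral_Icc_eq_integral_Ioc]
      rw [hcoe, hGicc t htmem]
    conv_lhs => arg 2; ext a; rw [mul_comm]
    conv_rhs => arg 2; ext a; rw [mul_comm]
    rw [lhs_eq, rhs_eq]
    exact integral_integral_swap hHint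
  rw [key]
  filter_upwards [hGmem.coeFn_toLp, ae_restrict_mem measurableSet_Icc] with x hcoe hxmem
  rw [hcoe, hGicc x hxmem]

lemma vpow (V : E →L[ℂ] E) (hV : IsVolterra V) (n : ℕ) (f : E) :
    ∀ᵐ x ∂(volume.restrict (Set.Icc (0:ℝ) 1)), ((V^(n+1)) f : ℝ → ℂ) x
      = ∫ s in Set.Ioc (0:ℝ) x, (((x-s)^n : ℝ) : ℂ)/(n ! : ℂ) * (f : ℝ → ℂ) s := by
  induction n with
  | zero =>
    filter_upwards [hV f, ae_restrict_mem measurableSet_Icc] with x hx hxmem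
    rw [pow_one, hx, intervalIntegral.integral_of_le hxmem.1]
    simp
  | succ n ih =>
    filter_upwards [hV ((V^(n+1)) f), ae_restrict_mem measurableSet_Icc] with x hx hxmem
    have hsub : volume.restrict (Set.Ioc (0:ℝ) x) ≤ volume.restrict (Set.Icc (0:ℝ) 1) :=
      Measure.restrict_mono (Set.Ioc_subset_Icc_self.trans
        (Set.Icc_subset_Icc le_rfl hxmem.2)) le_rfl
    rw [pow_succ' V (n+1), ContinuousLinearMap.mul_apply, hx,
      intervalIntegral.integral_of_le hxmem.1]
    rw [integral_congr_ae (ih.filter_mono (ae_mono hsub))]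
    exact triangle_lower n _ x hxmem.1 hxmem.2 ((integrable_of_E f).mono_measure hsub)

lemma wpow (V : E →L[ℂ] E) (hV : IsVolterra V) (n : ℕ) (f : E) :
    ∀ᵐ x ∂(volume.restrict (Set.Icc (0:ℝ) 1)), (((adjoint V)^(n+1)) f : ℝ → ℂ) x
      = ∫ s in Set.Ioc x (1:ℝ), (((s-x)^n : ℝ) : ℂ)/(n ! : ℂ) * (f : ℝ → ℂ) s := by
  induction n with
  | zero =>
    filter_upwards [adj_formula V hV f] with x hx
    rw [pow_one, hx]
    simp
  | succ n ih =>
    filter_upwards [adj_formula V hV (((adjoint V)^(n+1)) f),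
      ae_restrict_mem measurableSet_Icc] with x hx hxmem
    have hsub : volume.restrict (Set.Ioc x (1:ℝ)) ≤ volume.restrict (Set.Icc (0:ℝ) 1) :=
      Measure.restrict_mono (Set.Ioc_subset_Icc_self.trans
        (Set.Icc_subset_Icc hxmem.1 le_rfl)) le_rfl
    rw [pow_succ' (adjoint V) (n+1), ContinuousLinearMap.mul_apply, hx]
    rw [integral_congr_ae (ih.filter_mono (ae_mono hsub))]
    exact triangle_upper n _ x hxmem.1 hxmem.2 ((integrable_of_E f).mono_measure hsub)

lemma adj_pow (V : E →L[ℂ] E) (n : ℕ) : adjoint (V^n) = (adjoint V)^n := by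
  induction n with
  | zero =>
    rw [pow_zero, pow_zero, show (1 : E →L[ℂ] E) = ContinuousLinearMap.id ℂ E from rfl,
      adjoint_id]
  | succ n ih =>
    rw [pow_succ, show V ^ n * V = (V ^ n).comp V from rfl, adjoint_comp, ih]
    exact (pow_succ' _ _).symm

theorem volterra_re_pow (V : E →L[ℂ] E) (hV : IsVolterra V) (n : ℕ) (hn : 1 ≤ n) (f : E) :
    ∀ᵐ x ∂(volume.restrict (Set.Icc (0:ℝ) 1)),
      (((2:ℂ)⁻¹ • (V ^ n + ContinuousLinearMap.adjoint (V ^ n))) f : ℝ → ℂ) x =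
        (1/2 : ℂ) * ∫ t in Set.Icc (0:ℝ) 1,
          ((|x - t| ^ (n - 1) : ℝ) : ℂ) / (Nat.factorial (n - 1)) * (f : ℝ → ℂ) t := by
  obtain ⟨m, rfl⟩ : ∃ m, n = m + 1 := ⟨n - 1, (Nat.succ_pred_eq_of_pos hn).symm⟩
  simp only [Nat.add_sub_cancel]
  have hadd : (((2:ℂ)⁻¹ • (V ^ (m+1) + adjoint (V ^ (m+1)))) f : E)
      = (2:ℂ)⁻¹ • (((V^(m+1)) f : E) + (((adjoint V)^(m+1)) f : E)) := by
    rw [adj_pow]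
    simp [ContinuousLinearMap.smul_apply, ContinuousLinearMap.add_apply]
  have hcoe : ∀ᵐ x ∂(volume.restrict (Set.Icc (0:ℝ) 1)),
      (((2:ℂ)⁻¹ • (V ^ (m+1) + adjoint (V ^ (m+1)))) f : ℝ → ℂ) x
      = (2:ℂ)⁻¹ * (((V^(m+1)) f : ℝ → ℂ) x + (((adjoint V)^(m+1)) f : ℝ → ℂ) x) := by
    filter_upwards [Lp.coeFn_smul ((2:ℂ)⁻¹) (((V^(m+1)) f : E) + (((adjoint V)^(m+1)) f : E)),
      Lp.coeFn_add ((V^(m+1)) f) (((adjoint V)^(m+1)) f)] with x ha hb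
    rw [hadd, ha, Pi.smul_apply, hb, Pi.add_apply, smul_eq_mul]
  filter_upwards [vpow V hV m f, wpow V hV m f, hcoe,
    ae_restrict_mem measurableSet_Icc] with x hx1 hx2 hc hxmem
  rw [hc, hx1, hx2]
  set f' : ℝ → ℂ := (f : ℝ → ℂ) with hf'
  have hbnd : ∀ t ∈ Set.Icc (0:ℝ) 1,
      ‖((|x - t|^m : ℝ) : ℂ)/((m ! : ℕ) : ℂ) * f' t‖ ≤ ((m ! : ℕ) : ℝ)⁻¹ * ‖f' t‖ := by
    intro t ht
    rw [norm_mul, norm_div, Complex.norm_real, Complex.norm_natCast, Real.norm_eq_abs,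
      div_eq_mul_inv]
    apply mul_le_mul_of_nonneg_right _ (norm_nonneg _)
    calc |(|x - t|^m)| * ((m ! : ℕ) : ℝ)⁻¹ ≤ 1 * ((m ! : ℕ) : ℝ)⁻¹ := by
          apply mul_le_mul_of_nonneg_right _ (by positivity)
          rw [_root_.abs_pow, _root_.abs_abs]
          apply pow_le_one₀ (abs_nonneg _)
          rw [abs_le]
          constructor <;> nlinarith [hxmem.1, hxmem.2, ht.1, ht.2]
      _ = ((m ! : ℕ) : ℝ)⁻¹ := one_mul _
  have hio : ∀ s : Set ℝ, MeasurableSet s → s ⊆ Set.Icc (0:ℝ) 1 →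
      IntegrableOn (fun t => ((|x - t|^m : ℝ) : ℂ)/((m ! : ℕ) : ℂ) * f' t) s volume := by
    intro s hms hssub
    have hle : volume.restrict s ≤ volume.restrict (Set.Icc (0:ℝ) 1) :=
      Measure.restrict_mono hssub le_rfl
    apply Integrable.mono' (((integrable_of_E f).mono_measure hle).norm.const_mul
      ((m ! : ℕ) : ℝ)⁻¹)
    · have hcont : Continuous (fun t : ℝ => ((|x - t|^m : ℝ) : ℂ)/((m ! : ℕ) : ℂ)) :=
        (Complex.continuous_ofReal.comp
          (((continuous_const.sub continuous_id).abs.pow m))).div_const _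
      exact (hcont.aestronglyMeasurable.mul
        ((Lp.aestronglyMeasurable f).mono_measure hle))
    · filter_upwards [ae_restrict_mem hms] with t ht
      exact hbnd t (hssub ht)
  have hsplit : (∫ t in Set.Icc (0:ℝ) 1, ((|x - t|^m : ℝ) : ℂ)/((m ! : ℕ) : ℂ) * f' t)
      = (∫ t in Set.Ioc (0:ℝ) x, ((|x - t|^m : ℝ) : ℂ)/((m ! : ℕ) : ℂ) * f' t)
        + ∫ t in Set.Ioc x (1:ℝ), ((|x - t|^m : ℝ) : ℂ)/((m ! : ℕ) : ℂ) * f' t := by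
    rw [integral_Icc_eq_integral_Ioc, ← Set.Ioc_union_Ioc_eq_Ioc hxmem.1 hxmem.2]
    exact setIntegral_union (Set.Ioc_disjoint_Ioc_of_le le_rfl) measurableSet_Ioc
      (hio _ measurableSet_Ioc (Set.Ioc_subset_Icc_self.trans
        (Set.Icc_subset_Icc le_rfl hxmem.2)))
      (hio _ measurableSet_Ioc (Set.Ioc_subset_Icc_self.trans
        (Set.Icc_subset_Icc hxmem.1 le_rfl)))
  rw [hsplit]
  have e1 : (∫ t in Set.Ioc (0:ℝ) x, ((|x - t|^m : ℝ) : ℂ)/((m ! : ℕ) : ℂ) * f' t)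
      = ∫ t in Set.Ioc (0:ℝ) x, (((x - t)^m : ℝ) : ℂ)/((m ! : ℕ) : ℂ) * f' t := by
    apply setIntegral_congr_fun measurableSet_Ioc
    intro t ht
    have habs : |x - t| = x - t := _root_.abs_of_nonneg (by linarith [ht.2])
    simp only [habs]
  have e2 : (∫ t in Set.Ioc x (1:ℝ), ((|x - t|^m : ℝ) : ℂ)/((m ! : ℕ) : ℂ) * f' t)
      = ∫ t in Set.Ioc x (1:ℝ), (((t - x)^m : ℝ) : ℂ)/((m ! : ℕ) : ℂ) * f' t := by
    apply setIntegral_congr_fun measurableSet_Ioc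
    intro t ht
    have habs : |x - t| = t - x := by
      rw [abs_sub_comm]; exact _root_.abs_of_nonneg (by linarith [ht.1])
    simp only [habs]
  rw [e1, e2]
  ring
end
end

section
/- If n is odd, then the real part Re Vⁿ = (Vⁿ + V*ⁿ)/2 of the n-th power of the Volterra operator has at most n non-zero eigenvalues. -/
open MeasureTheory Complex ContinuousLinearMap

noncomputable section

open scoped ComplexConjugate

abbrev μ0 : Measure ℝ := volume.restrict (Set.Icc (0:ℝ) 1)

def oneE : E := MeasureTheory.Lp.const 2 μ0 (1:ℂ)

def Pop : E →L[ℂ] E := (ContinuousLinearMap.toSpanSingleton ℂ oneE).comp (innerSL ℂ oneE)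

lemma Pop_apply (f : E) : Pop f = (@inner ℂ E _ oneE f) • oneE := rfl

lemma integrable_coe (f : E) : Integrable (f : ℝ → ℂ) μ0 :=
  (Lp.memLp f).integrable one_le_two

lemma integrable_conj_coe (f : E) : Integrable (fun x => conj ((f : ℝ → ℂ) x)) μ0 := by
  refine (integrable_coe f).mono (continuous_star.comp_aestronglyMeasurable (integrable_coe f).1)
    (ae_of_all _ fun x => ?_)
  simp

lemma inner_eq (f g : E) : @inner ℂ E _ f g = ∫ x, conj ((f : ℝ → ℂ) x) * (g : ℝ → ℂ) x ∂μ0 := by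
  rw [MeasureTheory.L2.inner_def]; simp only [RCLike.inner_apply']

lemma inner_oneE (g : E) : @inner ℂ E _ oneE g = ∫ x, (g : ℝ → ℂ) x ∂μ0 := by
  rw [inner_eq]
  refine integral_congr_ae ?_
  unfold oneE
  filter_upwards [MeasureTheory.Lp.coeFn_const 2 μ0 (1:ℂ)] with x hx
  rw [hx]; simp [Function.const]

lemma inner_Pop (f g : E) :
    @inner ℂ E _ (Pop f) g = (∫ x, conj ((f : ℝ → ℂ) x) ∂μ0) * ∫ x, (g : ℝ → ℂ) x ∂μ0 := by
  rw [Pop_apply, inner_smul_left, inner_oneE, inner_oneE, ← integral_conj]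

lemma stepA (f : ℝ → ℂ) {x : ℝ} (hx : x ∈ Set.Icc (0:ℝ) 1) :
    ∫ t in (0:ℝ)..x, f t = ∫ t, (Set.Ioc (0:ℝ) x).indicator f t ∂μ0 := by
  rw [intervalIntegral.integral_of_le hx.1, integral_indicator measurableSet_Ioc,
    Measure.restrict_restrict measurableSet_Ioc,
    Set.inter_eq_left.mpr (Set.Ioc_subset_Icc_self.trans (Set.Icc_subset_Icc_right hx.2))]

lemma key (f g : ℝ → ℂ) (hf : Integrable f μ0) (hg : Integrable g μ0) :
    ((∫ x, (∫ t in (0:ℝ)..x, f t) * g x ∂μ0) + ∫ x, (f x * ∫ t in (0:ℝ)..x, g t) ∂μ0)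
      = (∫ x, f x ∂μ0) * ∫ x, g x ∂μ0 := by
  have haeI : ∀ᵐ x ∂μ0, x ∈ Set.Icc (0:ℝ) 1 := ae_restrict_mem measurableSet_Icc
  have hae0 : ∀ᵐ x ∂μ0, x ≠ (0:ℝ) := by
    refine (ae_iff).2 ?_
    simp only [ne_eq, not_not]
    have : {x : ℝ | x = 0} = {(0:ℝ)} := by ext; simp
    rw [this]
    simp [Measure.restrict_apply]
  -- term A
  have hA1 : (∫ x, (∫ t in (0:ℝ)..x, f t) * g x ∂μ0)
      = ∫ x, ∫ t, (Set.Ioc (0:ℝ) x).indicator f t * g x ∂μ0 ∂μ0 := by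
    refine integral_congr_ae ?_
    filter_upwards [haeI] with x hx
    rw [stepA f hx, ← integral_mul_const]
  have hSmeas : MeasurableSet {p : ℝ × ℝ | p.2 ∈ Set.Ioc 0 p.1} := by
    have : {p : ℝ × ℝ | p.2 ∈ Set.Ioc 0 p.1}
        = {p : ℝ × ℝ | (0:ℝ) < p.2} ∩ {p : ℝ × ℝ | p.2 ≤ p.1} := by
      ext p; simp [Set.mem_Ioc]
    rw [this]
    exact (measurableSet_lt measurable_const measurable_snd).inter
      (measurableSet_le measurable_snd measurable_fst)
  have hprod : Integrable (fun p : ℝ × ℝ => f p.2 * g p.1) (μ0.prod μ0) := by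
    simpa [mul_comm] using hg.mul_prod hf
  have hInd : Integrable
      (Function.uncurry fun x t => (Set.Ioc (0:ℝ) x).indicator f t * g x) (μ0.prod μ0) := by
    refine (hprod.indicator hSmeas).congr (ae_of_all _ fun p => ?_)
    simp only [Set.indicator_apply, Set.mem_setOf_eq, Function.uncurry]
    split_ifs <;> simp
  have hA2 : (∫ x, ∫ t, (Set.Ioc (0:ℝ) x).indicator f t * g x ∂μ0 ∂μ0)
      = ∫ t, ∫ x, (Set.Ioc (0:ℝ) x).indicator f t * g x ∂μ0 ∂μ0 :=
    integral_integral_swap hInd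
  have hA3 : (∫ t, ∫ x, (Set.Ioc (0:ℝ) x).indicator f t * g x ∂μ0 ∂μ0)
      = ∫ t, (f t * ∫ x, (Set.Ici t).indicator g x ∂μ0) ∂μ0 := by
    refine integral_congr_ae ?_
    filter_upwards [haeI, hae0] with t htI ht0
    have ht : (0:ℝ) < t := lt_of_le_of_ne htI.1 (Ne.symm ht0)
    rw [← integral_const_mul]
    refine integral_congr_ae (ae_of_all _ fun x => ?_)
    simp only [Set.indicator_apply, Set.mem_Ioc, Set.mem_Ici]
    by_cases h : t ≤ x
    · simp [h, ht, mul_comm]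
    · simp [h, ht]
  -- term B
  have hB1 : (∫ x, (f x * ∫ t in (0:ℝ)..x, g t) ∂μ0)
      = ∫ t, (f t * ∫ x, (Set.Ioc (0:ℝ) t).indicator g x ∂μ0) ∂μ0 := by
    refine integral_congr_ae ?_
    filter_upwards [haeI] with x hx
    rw [stepA g hx]
  -- integrability of the two marginals
  have hfg : Integrable (fun p : ℝ × ℝ => f p.1 * g p.2) (μ0.prod μ0) := hf.mul_prod hg
  have hint1 : Integrable (fun t => f t * ∫ x, (Set.Ici t).indicator g x ∂μ0) μ0 := by
    have h : Integrable (fun p : ℝ × ℝ => f p.1 * (Set.Ici p.1).indicator g p.2)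
        (μ0.prod μ0) := by
      refine (hfg.indicator (measurableSet_le measurable_fst measurable_snd)).congr
        (ae_of_all _ fun p => ?_)
      simp only [Set.indicator_apply, Set.mem_setOf_eq, Set.mem_Ici]
      split_ifs <;> simp
    simpa [← integral_const_mul] using h.integral_prod_left
  have hint2 : Integrable (fun t => f t * ∫ x, (Set.Ioc (0:ℝ) t).indicator g x ∂μ0) μ0 := by
    have hS' : MeasurableSet {p : ℝ × ℝ | p.2 ∈ Set.Ioc 0 p.1} := hSmeas
    have hS'' : MeasurableSet (Prod.swap ⁻¹' {p : ℝ × ℝ | p.2 ∈ Set.Ioc 0 p.1} : Set (ℝ × ℝ)) :=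
      hS'.preimage measurable_swap
    have h : Integrable (fun p : ℝ × ℝ => f p.1 * (Set.Ioc (0:ℝ) p.1).indicator g p.2)
        (μ0.prod μ0) := by
      refine (hfg.indicator (s := {p : ℝ × ℝ | p.2 ∈ Set.Ioc 0 p.1}) hSmeas).congr
        (ae_of_all _ fun p => ?_)
      simp only [Set.indicator_apply, Set.mem_setOf_eq]
      split_ifs <;> simp
    simpa [← integral_const_mul] using h.integral_prod_left
  rw [hA1, hA2, hA3, hB1, ← integral_add hint1 hint2]
  rw [← integral_mul_const]
  refine integral_congr_ae ?_
  filter_upwards [haeI, hae0] with t htI ht0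
  have ht : (0:ℝ) < t := lt_of_le_of_ne htI.1 (Ne.symm ht0)
  rw [← mul_add]
  congr 1
  have e1 : (∫ x, (Set.Ici t).indicator g x ∂μ0) = ∫ x in Set.Ioc t 1, g x := by
    rw [integral_indicator measurableSet_Ici, Measure.restrict_restrict measurableSet_Ici]
    have : Set.Ici t ∩ Set.Icc (0:ℝ) 1 = Set.Icc t 1 := by
      ext x
      simp only [Set.mem_inter_iff, Set.mem_Ici, Set.mem_Icc]
      constructor
      · rintro ⟨h1, _, h3⟩; exact ⟨h1, h3⟩
      · rintro ⟨h1, h2⟩; exact ⟨h1, le_trans ht.le h1, h2⟩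
    rw [this, ← integral_Icc_eq_integral_Ioc]
  have e2 : (∫ x, (Set.Ioc (0:ℝ) t).indicator g x ∂μ0) = ∫ x in Set.Ioc (0:ℝ) t, g x := by
    rw [integral_indicator measurableSet_Ioc, Measure.restrict_restrict measurableSet_Ioc,
      Set.inter_eq_left.mpr (Set.Ioc_subset_Icc_self.trans (Set.Icc_subset_Icc_right htI.2))]
  have hgOn : IntegrableOn g (Set.Icc (0:ℝ) 1) volume := hg
  rw [e1, e2, add_comm, ← setIntegral_union (Set.Ioc_disjoint_Ioc_of_le le_rfl) measurableSet_Ioc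
      (hgOn.mono_set (Set.Ioc_subset_Icc_self.trans (Set.Icc_subset_Icc_right htI.2)))
      (hgOn.mono_set (Set.Ioc_subset_Icc_self.trans (Set.Icc_subset_Icc_left ht.le))),
    Set.Ioc_union_Ioc_eq_Ioc ht.le htI.2]
  exact (integral_Icc_eq_integral_Ioc).symm

lemma adjoint_volterra (V : E →L[ℂ] E) (hV : IsVolterra V) :
    ContinuousLinearMap.adjoint V = Pop - V := by
  have h : ∀ f g : E, @inner ℂ E _ ((Pop - V) f) g = @inner ℂ E _ f (V g) := by
    intro f g
    have haeI : ∀ᵐ x ∂μ0, x ∈ Set.Icc (0:ℝ) 1 := ae_restrict_mem measurableSet_Icc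
    have lhs1 : @inner ℂ E _ (V f) g
        = ∫ x, (∫ t in (0:ℝ)..x, conj ((f : ℝ → ℂ) t)) * (g : ℝ → ℂ) x ∂μ0 := by
      rw [inner_eq]
      refine integral_congr_ae ?_
      filter_upwards [hV f, haeI] with x hx hxI
      rw [hx, intervalIntegral.integral_of_le hxI.1, intervalIntegral.integral_of_le hxI.1,
        ← integral_conj]
    have lhs2 : @inner ℂ E _ f (V g)
        = ∫ x, (conj ((f : ℝ → ℂ) x) * ∫ t in (0:ℝ)..x, (g : ℝ → ℂ) t) ∂μ0 := by
      rw [inner_eq]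
      refine integral_congr_ae ?_
      filter_upwards [hV g] with x hx
      rw [hx]
    have hk := key (fun t => conj ((f : ℝ → ℂ) t)) (g : ℝ → ℂ)
      (integrable_conj_coe f) (integrable_coe g)
    rw [ContinuousLinearMap.sub_apply, inner_sub_left, inner_Pop, lhs2, ← hk, ← lhs1]
    ring
  exact ((ContinuousLinearMap.eq_adjoint_iff (Pop - V) V).mpr h).symm

theorem re_pow_finitely_many_eigenvalues (V : E →L[ℂ] E) (hV : IsVolterra V)
    (n : ℕ) (hn : Odd n) :
    {μ : ℂ | μ ≠ 0 ∧ Module.End.HasEigenvalue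
        (((2:ℂ)⁻¹ • (V ^ n + ContinuousLinearMap.adjoint (V ^ n)) : E →L[ℂ] E) : E →ₗ[ℂ] E) μ}.Finite ∧
    {μ : ℂ | μ ≠ 0 ∧ Module.End.HasEigenvalue
        (((2:ℂ)⁻¹ • (V ^ n + ContinuousLinearMap.adjoint (V ^ n)) : E →L[ℂ] E) : E →ₗ[ℂ] E) μ}.ncard ≤ n := by
  classical
  set T : E →L[ℂ] E := (2:ℂ)⁻¹ • (V ^ n + ContinuousLinearMap.adjoint (V ^ n)) with hT
  let v : Fin n → E := fun k => (V ^ (k : ℕ)) oneE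
  let U : Submodule ℂ E := Submodule.span ℂ (Set.range v)
  have hUfin : FiniteDimensional ℂ U :=
    FiniteDimensional.span_of_finite ℂ (Set.finite_range v)
  have hUrank : Module.finrank ℂ ↥U ≤ n := by
    simpa [Set.finrank] using finrank_range_le_card v
  -- the inductive range claim
  have hstep : ∀ m : ℕ, ∀ f : E, ((Pop - V) ^ m - (-V) ^ m) f ∈
      Submodule.span ℂ ((fun k : ℕ => (V ^ k) oneE) '' Set.Iio m) := by
    intro m
    induction m with
    | zero => intro f; simp
    | succ m ih =>
      intro f
      have expand : ((Pop - V) ^ (m + 1) - (-V) ^ (m + 1)) f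
          = Pop (((Pop - V) ^ m) f) - V ((((Pop - V) ^ m - (-V) ^ m)) f) := by
        simp only [pow_succ', ContinuousLinearMap.sub_apply, ContinuousLinearMap.mul_apply,
          ContinuousLinearMap.neg_apply, map_sub, map_neg]
        abel
      rw [expand]
      refine Submodule.sub_mem _ ?_ ?_
      · rw [Pop_apply]
        refine Submodule.smul_mem _ _ (Submodule.subset_span ?_)
        exact ⟨0, by simp, by simp⟩
      · have h1 := Submodule.apply_mem_span_image_of_mem_span (V : E →ₗ[ℂ] E) (ih f)
        refine Submodule.span_mono ?_ h1
        rintro _ ⟨_, ⟨k, hk, rfl⟩, rfl⟩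
        refine ⟨k + 1, ?_, ?_⟩
        · simpa using Nat.succ_lt_succ hk
        · simp [pow_succ', ContinuousLinearMap.mul_apply]
      -- done
  have hsub : ((fun k : ℕ => (V ^ k) oneE) '' Set.Iio n) ⊆ Set.range v := by
    rintro _ ⟨k, hk, rfl⟩
    exact ⟨⟨k, hk⟩, rfl⟩
  have hadjV : ContinuousLinearMap.adjoint V = Pop - V := adjoint_volterra V hV
  have hadjn : ContinuousLinearMap.adjoint (V ^ n) = (Pop - V) ^ n := by
    rw [← ContinuousLinearMap.star_eq_adjoint, star_pow,
      ContinuousLinearMap.star_eq_adjoint, hadjV]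
  have hTmem : ∀ f : E, T f ∈ U := by
    intro f
    have h1 : (V ^ n + ContinuousLinearMap.adjoint (V ^ n)) f
        = ((Pop - V) ^ n - (-V) ^ n) f := by
      rw [hadjn, Odd.neg_pow hn]
      simp only [ContinuousLinearMap.add_apply, ContinuousLinearMap.sub_apply,
        ContinuousLinearMap.neg_apply, sub_neg_eq_add]
      abel
    have h2 : T f = (2:ℂ)⁻¹ • ((Pop - V) ^ n - (-V) ^ n) f := by
      rw [hT, ContinuousLinearMap.smul_apply, h1]
    rw [h2]
    exact U.smul_mem _ (Submodule.span_mono hsub (hstep n f))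
  -- eigenvalue part
  set S := {μ : ℂ | μ ≠ 0 ∧ Module.End.HasEigenvalue (T : E →ₗ[ℂ] E) μ} with hS
  have hx : ∀ μ : S, ∃ x : E, Module.End.HasEigenvector (T : E →ₗ[ℂ] E) (μ : ℂ) x :=
    fun μ => μ.2.2.exists_hasEigenvector
  choose xs hxs using hx
  have hmem : ∀ μ : S, xs μ ∈ U := by
    intro μ
    have h1 : (T : E →ₗ[ℂ] E) (xs μ) = (μ : ℂ) • xs μ := (hxs μ).apply_eq_smul
    have h2 : xs μ = (μ : ℂ)⁻¹ • T (xs μ) := by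
      rw [show T (xs μ) = (T : E →ₗ[ℂ] E) (xs μ) from rfl, h1, smul_smul,
        inv_mul_cancel₀ μ.2.1, one_smul]
    rw [h2]
    exact U.smul_mem _ (hTmem _)
  have hli : LinearIndependent ℂ xs :=
    Module.End.eigenvectors_linearIndependent (T : E →ₗ[ℂ] E) S xs hxs
  let ys : S → U := fun μ => ⟨xs μ, hmem μ⟩
  have hliy : LinearIndependent ℂ ys :=
    LinearIndependent.of_comp U.subtype hli
  haveI hfinS : Finite ↥S := hliy.finite
  have hfin : S.Finite := Set.toFinite S
  refine ⟨hfin, ?_⟩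
  haveI := hfin.fintype
  have hcard : Fintype.card ↥S ≤ Module.finrank ℂ ↥U := hliy.fintype_card_le_finrank
  have : S.ncard = Fintype.card ↥S := by
    rw [← Nat.card_coe_set_eq, Nat.card_eq_fintype_card]
  omega
end
end

section
/- If n is even, then the imaginary part Im Vⁿ = (Vⁿ − V*ⁿ)/(2i) of the n-th power of the Volterra operator has at most n non-zero eigenvalues. -/
open MeasureTheory Complex ContinuousLinearMap
open scoped InnerProductSpace

noncomputable section

namespace VoltAux

abbrev mu : MeasureTheory.Measure ℝ := volume.restrict (Set.Icc (0:ℝ) 1)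

instance : IsFiniteMeasure (volume.restrict (Set.Icc (0:ℝ) 1)) := by
  constructor
  rw [Measure.restrict_apply_univ]
  exact measure_Icc_lt_top

lemma integrable_of_E (f : E) : Integrable (f : ℝ → ℂ) mu :=
  (Lp.memLp f).integrable (by norm_num)


def one : E := MemLp.toLp (fun _ => (1:ℂ)) (memLp_const 1)

lemma key (V : E →L[ℂ] E) (hV : IsVolterra V) (f g : E) :
    ⟪V f, g⟫_ℂ + ⟪f, V g⟫_ℂ
      = (∫ t, (starRingEnd ℂ) ((f : ℝ → ℂ) t) ∂mu) * (∫ t, (g : ℝ → ℂ) t ∂mu) := by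
  have hf := integrable_of_E f
  have hg := integrable_of_E g
  have hfc : Integrable (fun t => (starRingEnd ℂ) ((f : ℝ → ℂ) t)) mu := by
    simpa using (Complex.conjCLE.toContinuousLinearMap).integrable_comp hf
  set D : Set (ℝ × ℝ) := {q : ℝ × ℝ | q.2 ≤ q.1} with hD
  set D' : Set (ℝ × ℝ) := {q : ℝ × ℝ | q.1 ≤ q.2} with hD'
  have hDm : MeasurableSet D := measurableSet_le measurable_snd measurable_fst
  have hD'mu : MeasurableSet D' := measurableSet_le measurable_fst measurable_snd
  set h₀ : ℝ × ℝ → ℂ := fun q => (g : ℝ → ℂ) q.1 * (starRingEnd ℂ) ((f : ℝ → ℂ) q.2) with hh₀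
  set h₁ : ℝ × ℝ → ℂ := fun q => (starRingEnd ℂ) ((f : ℝ → ℂ) q.1) * (g : ℝ → ℂ) q.2 with hh₁
  have hint0 : Integrable h₀ (mu.prod mu) := hg.mul_prod hfc
  have hint1 : Integrable h₁ (mu.prod mu) := hfc.mul_prod hg
  -- rewriting the interval integral as an indicator integral
  have hindic : ∀ (u : E), Integrable (u : ℝ → ℂ) mu → ∀ x ∈ Set.Icc (0:ℝ) 1,
      (∫ t in (0:ℝ)..x, (u : ℝ → ℂ) t) = ∫ t, (Set.Iic x).indicator (u : ℝ → ℂ) t ∂mu := by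
    intro u hu x hx
    rw [intervalIntegral.integral_of_le hx.1, integral_indicator measurableSet_Iic,
      Measure.restrict_restrict measurableSet_Iic]
    have hset : Set.Iic x ∩ Set.Icc (0:ℝ) 1 = Set.Icc 0 x := by
      ext t
      simp only [Set.mem_inter_iff, Set.mem_Iic, Set.mem_Icc]
      constructor
      · rintro ⟨h1, h2, h3⟩; exact ⟨h2, h1⟩
      · rintro ⟨h1, h2⟩; exact ⟨h2, h1, h2.trans hx.2⟩
    rw [hset, integral_Icc_eq_integral_Ioc]
  -- term 1
  have t1 : ⟪V f, g⟫_ℂ = ∫ q, D.indicator h₀ q ∂(mu.prod mu) := by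
    rw [L2.inner_def]
    rw [← integral_integral (f := fun x t => D.indicator h₀ (x, t))
      (by exact hint0.indicator hDm)]
    refine integral_congr_ae ?_
    filter_upwards [hV f, ae_restrict_mem measurableSet_Icc] with x hVf hx
    rw [RCLike.inner_apply, hVf, hindic f hf x hx, ← integral_conj]
    have hconj : (fun t => (starRingEnd ℂ) ((Set.Iic x).indicator (f : ℝ → ℂ) t))
        = fun t => (Set.Iic x).indicator (fun t => (starRingEnd ℂ) ((f : ℝ → ℂ) t)) t := by
      funext t
      by_cases h : t ∈ Set.Iic x <;> simp [Set.indicator_apply, h]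
    rw [hconj, ← integral_const_mul]
    refine integral_congr_ae (Filter.Eventually.of_forall fun t => ?_)
    by_cases h : t ≤ x <;>
      simp [Set.indicator_apply, hD, hh₀, h, Set.mem_Iic, mul_comm]
  -- term 2
  have t2 : ⟪f, V g⟫_ℂ = ∫ q, D.indicator h₁ q ∂(mu.prod mu) := by
    rw [L2.inner_def]
    rw [← integral_integral (f := fun x t => D.indicator h₁ (x, t))
      (by exact hint1.indicator hDm)]
    refine integral_congr_ae ?_
    filter_upwards [hV g, ae_restrict_mem measurableSet_Icc] with x hVg hx
    rw [RCLike.inner_apply, hVg, hindic g hg x hx, ← integral_mul_const]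
    refine integral_congr_ae (Filter.Eventually.of_forall fun t => ?_)
    by_cases h : t ≤ x <;>
      simp [Set.indicator_apply, hD, hh₁, h, Set.mem_Iic, mul_comm]
  -- swap term 2
  have t2' : (∫ q, D.indicator h₁ q ∂(mu.prod mu)) = ∫ q, D'.indicator h₀ q ∂(mu.prod mu) := by
    have hp : ∀ z : ℝ × ℝ, D.indicator h₁ z = D'.indicator h₀ z.swap := by
      intro z
      by_cases h : z.2 ≤ z.1 <;>
        simp [Set.indicator_apply, hD, hD', hh₀, hh₁, h, mul_comm]
    calc (∫ q, D.indicator h₁ q ∂(mu.prod mu))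
        = ∫ q, D'.indicator h₀ q.swap ∂(mu.prod mu) := by
          exact integral_congr_ae (Filter.Eventually.of_forall hp)
      _ = ∫ q, D'.indicator h₀ q ∂(mu.prod mu) := integral_prod_swap _
  -- diagonal is null
  have hdiag : (mu.prod mu) {q : ℝ × ℝ | q.1 = q.2} = 0 := by
    rw [Measure.measure_prod_null (measurableSet_eq_fun measurable_fst measurable_snd)]
    filter_upwards with x
    have : (Prod.mk x ⁻¹' {q : ℝ × ℝ | q.1 = q.2}) = {x} := by
      ext t; simp [eq_comm]
    simp [this]
  have hsum : (∫ q, D.indicator h₀ q ∂(mu.prod mu)) + ∫ q, D'.indicator h₀ q ∂(mu.prod mu)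
      = ∫ q, h₀ q ∂(mu.prod mu) := by
    rw [← integral_add (hint0.indicator hDm) (hint0.indicator hD'mu)]
    refine integral_congr_ae ?_
    have hcompl : ∀ᵐ q ∂(mu.prod mu), q ∉ {q : ℝ × ℝ | q.1 = q.2} :=
      (ae_iff).mpr (by simpa using hdiag)
    filter_upwards [hcompl] with q hq
    rcases lt_or_gt_of_ne (fun h => hq h) with h | h
    · simp [Set.indicator_apply, hD, hD', not_le.mpr h, le_of_lt h]
    · simp [Set.indicator_apply, hD, hD', not_le.mpr h, le_of_lt h]
  rw [t1, t2, t2', hsum, hh₀]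
  rw [integral_prod_mul (μ := mu) (ν := mu) (f := fun x => (g : ℝ → ℂ) x)
    (g := fun t => (starRingEnd ℂ) ((f : ℝ → ℂ) t))]
  ring


def P : E →L[ℂ] E := (innerSL ℂ one).smulRight one

lemma P_apply (f : E) : P f = ⟪one, f⟫_ℂ • one := rfl

lemma inner_one_left (g : E) : ⟪one, g⟫_ℂ = ∫ t, (g : ℝ → ℂ) t ∂mu := by
  rw [L2.inner_def]
  refine integral_congr_ae ?_
  filter_upwards [MemLp.coeFn_toLp (memLp_const (1:ℂ)) (p := 2) (μ := mu)] with t ht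
  rw [RCLike.inner_apply, show ((one : E) : ℝ → ℂ) t = 1 from ht]
  simp

lemma inner_one_right (f : E) : ⟪f, one⟫_ℂ = ∫ t, (starRingEnd ℂ) ((f : ℝ → ℂ) t) ∂mu := by
  rw [← inner_conj_symm, inner_one_left, ← integral_conj]

lemma adjoint_eq (V : E →L[ℂ] E) (hV : IsVolterra V) : adjoint V = P - V := by
  refine ContinuousLinearMap.ext fun f => ?_
  refine ext_inner_right ℂ fun g => ?_
  rw [adjoint_inner_left]
  have h := key V hV f g
  rw [sub_apply, inner_sub_left, P_apply, inner_smul_left, inner_conj_symm,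
    inner_one_left, inner_one_right]
  rw [← h]
  ring


def S (V : E →L[ℂ] E) (n : ℕ) : Submodule ℂ E :=
  Submodule.span ℂ (Set.range fun j : Fin n => (V ^ (j : ℕ)) one)

lemma mem_S (V : E →L[ℂ] E) (n j : ℕ) (hj : j < n) : (V ^ j) one ∈ S V n :=
  Submodule.subset_span ⟨⟨j, hj⟩, rfl⟩

lemma smul_one_mem (V : E →L[ℂ] E) (n : ℕ) (hn : 0 < n) (c : ℂ) : c • one ∈ S V n :=
  Submodule.smul_mem _ c (by simpa using mem_S V n 0 hn)

lemma D_mem (V : E →L[ℂ] E) (k : ℕ) (f : E) :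
    ((P - V) ^ k) f - ((-V) ^ k) f ∈ S V k := by
  induction k generalizing f with
  | zero => simp
  | succ k ih =>
    have hstep : ((P - V) ^ (k + 1)) f - ((-V) ^ (k + 1)) f
        = (P - V) (((P - V) ^ k) f - ((-V) ^ k) f) + P (((-V) ^ k) f) := by
      simp only [pow_succ', ContinuousLinearMap.mul_apply, ContinuousLinearMap.sub_apply, ContinuousLinearMap.neg_apply, map_sub, map_neg]
      abel
    rw [hstep]
    refine Submodule.add_mem _ ?_ (by rw [P_apply]; exact smul_one_mem V (k+1) k.succ_pos _)
    have hmono : ∀ x ∈ S V k, (P - V) x ∈ S V (k + 1) := by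
      intro x hx
      rw [sub_apply]
      refine Submodule.sub_mem _ (by rw [P_apply]; exact smul_one_mem V (k+1) k.succ_pos _) ?_
      have hle : S V k ≤ Submodule.comap (V : E →ₗ[ℂ] E) (S V (k + 1)) := by
        rw [S, Submodule.span_le]
        rintro _ ⟨j, rfl⟩
        rw [SetLike.mem_coe, Submodule.mem_comap]
        have hpow : (V : E →ₗ[ℂ] E) ((V ^ (j : ℕ)) one) = (V ^ ((j : ℕ) + 1)) one := by
          simp [pow_succ', mul_apply]
        rw [hpow]
        exact mem_S V (k + 1) ((j : ℕ) + 1) (by omega)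
      exact hle hx
    exact hmono _ (ih f)

lemma T_mem (V : E →L[ℂ] E) (hV : IsVolterra V) (n : ℕ) (hn : Even n) (f : E) :
    ((((2 * Complex.I)⁻¹ : ℂ) • (V ^ n - adjoint (V ^ n))) f) ∈ S V n := by
  have hadj : adjoint (V ^ n) = (P - V) ^ n := by
    rw [← star_eq_adjoint, star_pow, star_eq_adjoint, adjoint_eq V hV]
  rw [smul_apply, sub_apply, hadj]
  have h := D_mem V n f
  rw [hn.neg_pow] at h
  rw [show (V ^ n) f - ((P - V) ^ n) f = -(((P - V) ^ n) f - (V ^ n) f) from (neg_sub _ _).symm]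
  exact Submodule.smul_mem _ _ (Submodule.neg_mem _ h)

end VoltAux

open VoltAux in
theorem im_pow_finitely_many_eigenvalues (V : E →L[ℂ] E) (hV : IsVolterra V)
    (n : ℕ) (hn : Even n) (hn1 : 1 ≤ n) :
    {μ : ℂ | μ ≠ 0 ∧ Module.End.HasEigenvalue
        ((((2 * Complex.I)⁻¹ : ℂ) • (V ^ n - ContinuousLinearMap.adjoint (V ^ n)) : E →L[ℂ] E) : E →ₗ[ℂ] E) μ}.Finite ∧
    {μ : ℂ | μ ≠ 0 ∧ Module.End.HasEigenvalue
        ((((2 * Complex.I)⁻¹ : ℂ) • (V ^ n - ContinuousLinearMap.adjoint (V ^ n)) : E →L[ℂ] E) : E →ₗ[ℂ] E) μ}.ncard ≤ n := by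
  set T : E →ₗ[ℂ] E :=
    ((((2 * Complex.I)⁻¹ : ℂ) • (V ^ n - ContinuousLinearMap.adjoint (V ^ n)) : E →L[ℂ] E) : E →ₗ[ℂ] E) with hT
  set Λ : Set ℂ := {μ : ℂ | μ ≠ 0 ∧ Module.End.HasEigenvalue T μ} with hΛ
  have hmemS : ∀ f : E, T f ∈ S V n := fun f => T_mem V hV n hn f
  have hev : ∀ μ : Λ, ∃ v, Module.End.HasEigenvector T (μ : ℂ) v :=
    fun μ => (μ.2.2).exists_hasEigenvector
  choose v hv using hev
  have li : LinearIndependent ℂ v := Module.End.eigenvectors_linearIndependent T Λ v hv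
  have hvS : ∀ μ : Λ, v μ ∈ S V n := by
    intro μ
    have h1 : T (v μ) = (μ : ℂ) • v μ := (hv μ).apply_eq_smul
    have h2 : v μ = ((μ : ℂ))⁻¹ • T (v μ) := by
      rw [h1, smul_smul, inv_mul_cancel₀ μ.2.1, one_smul]
    rw [h2]
    exact Submodule.smul_mem _ _ (hmemS _)
  let w : Λ → S V n := fun μ => ⟨v μ, hvS μ⟩
  have hcomp : ((S V n).subtype ∘ w) = v := rfl
  have liw : LinearIndependent ℂ w := LinearIndependent.of_comp _ (hcomp ▸ li)
  haveI : Module.Finite ℂ (S V n) := Module.Finite.span_of_finite ℂ (Set.finite_range _)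
  have hfin : Λ.Finite := Set.finite_coe_iff.mp liw.finite
  refine ⟨hfin, ?_⟩
  haveI := hfin.fintype
  calc Λ.ncard = Fintype.card Λ := by rw [Set.ncard_eq_toFinset_card', Set.toFinset_card]
    _ ≤ Module.finrank ℂ (S V n) := liw.fintype_card_le_finrank
    _ ≤ n := by
        exact (finrank_range_le_card (R := ℂ) (fun j : Fin n => (V ^ (j : ℕ)) one)).trans_eq (Fintype.card_fin n)
end
end

section
/- The set of eigenvalues of Im V = (V − V*)/(2i) is exactly {1/((2n+1)π) : n ∈ ℤ}. -/
open MeasureTheory Complex ContinuousLinearMap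

noncomputable section

namespace VolterraAux

local notation "ν" => volume.restrict (Set.Icc (0:ℝ) 1)

instance : IsFiniteMeasure (volume.restrict (Set.Icc (0:ℝ) 1)) := by
  constructor
  rw [Measure.restrict_apply_univ, Real.volume_Icc]
  exact ENNReal.ofReal_lt_top

/-- truncation of the representative to [0,1] -/
def tr (f : E) : ℝ → ℂ := Set.indicator (Set.Icc (0:ℝ) 1) (f : ℝ → ℂ)

lemma integrable_coe (f : E) : IntegrableOn (f : ℝ → ℂ) (Set.Icc (0:ℝ) 1) volume :=
  (Lp.memLp f).integrable (by norm_num)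

lemma integrable_tr (f : E) : Integrable (tr f) volume :=
  (integrable_indicator_iff measurableSet_Icc).2 (integrable_coe f)

lemma tr_ae (f : E) : tr f =ᵐ[ν] (f : ℝ → ℂ) := by
  filter_upwards [ae_restrict_mem measurableSet_Icc] with x hx
  simp [tr, Set.indicator_of_mem hx]

/-- primitive of the truncation -/
def prim (f : E) (x : ℝ) : ℂ := ∫ t in (0:ℝ)..x, tr f t

lemma continuous_prim (f : E) : Continuous (prim f) :=
  (integrable_tr f).continuous_primitive 0

lemma prim_zero (f : E) : prim f 0 = 0 := intervalIntegral.integral_same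

lemma prim_eq_interval (f : E) {x : ℝ} (hx : x ∈ Set.Icc (0:ℝ) 1) :
    prim f x = ∫ t in (0:ℝ)..x, (f : ℝ → ℂ) t := by
  rw [prim, intervalIntegral.integral_of_le hx.1, intervalIntegral.integral_of_le hx.1]
  refine setIntegral_congr_fun measurableSet_Ioc (fun t ht => ?_)
  exact Set.indicator_of_mem (show t ∈ Set.Icc (0:ℝ) 1 from ⟨le_of_lt ht.1, ht.2.trans hx.2⟩) _

lemma integral_Iic_tr (f : E) {x : ℝ} (hx : x ∈ Set.Icc (0:ℝ) 1) :
    ∫ t in Set.Iic x, tr f t = prim f x := by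
  rw [tr, setIntegral_indicator measurableSet_Icc]
  have h1 : Set.Iic x ∩ Set.Icc 0 1 = Set.Icc 0 x := by
    ext t
    simp only [Set.mem_inter_iff, Set.mem_Iic, Set.mem_Icc]
    constructor
    · rintro ⟨h1, h2, h3⟩; exact ⟨h2, h1⟩
    · rintro ⟨h1, h2⟩; exact ⟨h2, h1, h2.trans hx.2⟩
  rw [h1, MeasureTheory.integral_Icc_eq_integral_Ioc,
    ← intervalIntegral.integral_of_le hx.1, ← prim_eq_interval f hx]

lemma integral_Ici_tr (g : E) {x : ℝ} (hx : x ∈ Set.Icc (0:ℝ) 1) :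
    ∫ t in Set.Ici x, tr g t = prim g 1 - prim g x := by
  rw [tr, setIntegral_indicator measurableSet_Icc]
  have h1 : Set.Ici x ∩ Set.Icc 0 1 = Set.Icc x 1 := by
    ext t
    simp only [Set.mem_inter_iff, Set.mem_Ici, Set.mem_Icc]
    constructor
    · rintro ⟨h1, h2, h3⟩; exact ⟨h1, h3⟩
    · rintro ⟨h1, h2⟩; exact ⟨h1, hx.1.trans h1, h2⟩
  have h2 : ∫ t in Set.Icc x 1, (g : ℝ → ℂ) t = ∫ t in Set.Ioc x 1, tr g t := by
    rw [MeasureTheory.integral_Icc_eq_integral_Ioc]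
    refine (setIntegral_congr_fun measurableSet_Ioc (fun t ht => ?_)).symm
    exact Set.indicator_of_mem (show t ∈ Set.Icc (0:ℝ) 1 from ⟨hx.1.trans (le_of_lt ht.1), ht.2⟩) _
  rw [h1, h2, ← intervalIntegral.integral_of_le hx.2]
  have := intervalIntegral.integral_interval_sub_left
    ((integrable_tr g).intervalIntegrable (a := 0) (b := 1))
    ((integrable_tr g).intervalIntegrable (a := 0) (b := x))
  rw [← this]; rfl

lemma memL2_of_continuous {u : ℝ → ℂ} (hu : Continuous u) :
    MemLp u 2 (volume.restrict (Set.Icc (0:ℝ) 1)) := by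
  obtain ⟨C, hC⟩ := isCompact_Icc.exists_bound_of_continuousOn
    (f := u) (s := Set.Icc (0:ℝ) 1) hu.continuousOn
  refine MemLp.of_bound (hu.aestronglyMeasurable) C ?_
  filter_upwards [ae_restrict_mem measurableSet_Icc] with x hx using hC x hx


lemma inner_V_eq (V : E →L[ℂ] E) (hV : IsVolterra V) (f g : E) :
    (inner ℂ g (V f) : ℂ) =
      ∫ t, (starRingEnd ℂ) (prim g 1 - prim g t) * (f : ℝ → ℂ) t ∂ν := by
  have hf := integrable_tr f
  have hg := integrable_tr g
  have hgc : Integrable (fun x => (starRingEnd ℂ) (tr g x)) volume := by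
    refine Integrable.mono' hg.norm
      (Complex.continuous_conj.comp_aestronglyMeasurable hg.aestronglyMeasurable) ?_
    filter_upwards with x
    rw [RCLike.norm_conj]
  set S : Set (ℝ × ℝ) := {q : ℝ × ℝ | q.2 ≤ q.1} with hS
  have hSm : MeasurableSet S := measurableSet_le measurable_snd measurable_fst
  set ψ : ℝ × ℝ → ℂ := fun q => (starRingEnd ℂ) (tr g q.1) * tr f q.2 with hψ
  have hψint : Integrable ψ (volume.prod volume) := hgc.mul_prod hf
  have hΦint : Integrable (S.indicator ψ) (volume.prod volume) := hψint.indicator hSm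
  -- step 1 : inner product as a volume integral
  have e1 : (inner ℂ g (V f) : ℂ)
      = ∫ x, (starRingEnd ℂ) (tr g x) * (∫ t in Set.Iic x, tr f t) ∂volume := by
    rw [MeasureTheory.L2.inner_def, ← integral_indicator measurableSet_Icc]
    refine integral_congr_ae ?_
    have h1 : ∀ᵐ x ∂(volume : Measure ℝ), x ∈ Set.Icc (0:ℝ) 1 →
        (V f : ℝ → ℂ) x = ∫ t in (0:ℝ)..x, (f : ℝ → ℂ) t :=
      (ae_restrict_iff' measurableSet_Icc).1 (hV f)
    filter_upwards [h1] with x hx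
    by_cases hmem : x ∈ Set.Icc (0:ℝ) 1
    · rw [Set.indicator_of_mem hmem]
      rw [RCLike.inner_apply, hx hmem, tr, Set.indicator_of_mem hmem,
        integral_Iic_tr f hmem, prim_eq_interval f hmem, mul_comm]
    · rw [Set.indicator_of_notMem hmem]
      have : tr g x = 0 := Set.indicator_of_notMem hmem _
      rw [this, map_zero, zero_mul]
  -- step 2 : sections of the indicator function
  have sec1 : ∀ x : ℝ, (∫ t, S.indicator ψ (x, t) ∂volume)
      = (starRingEnd ℂ) (tr g x) * ∫ t in Set.Iic x, tr f t := by
    intro x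
    have h2 : (fun t => S.indicator ψ (x, t))
        = (Set.Iic x).indicator (fun t => (starRingEnd ℂ) (tr g x) * tr f t) := by
      funext t
      by_cases h : t ≤ x
      · simp [S, ψ, Set.indicator_apply, h]
      · simp [S, ψ, Set.indicator_apply, h]
    rw [h2, integral_indicator measurableSet_Iic, integral_const_mul]
  have sec2 : ∀ t : ℝ, (∫ x, S.indicator ψ (x, t) ∂volume)
      = (starRingEnd ℂ) (∫ x in Set.Ici t, tr g x) * tr f t := by
    intro t
    have h2 : (fun x => S.indicator ψ (x, t))
        = (Set.Ici t).indicator (fun x => (starRingEnd ℂ) (tr g x) * tr f t) := by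
      funext x
      by_cases h : t ≤ x
      · simp [S, ψ, Set.indicator_apply, h]
      · simp [S, ψ, Set.indicator_apply, h]
    rw [h2, integral_indicator measurableSet_Ici, integral_mul_const, ← integral_conj]
  -- step 3 : Fubini
  have swap : (∫ x, ∫ t, S.indicator ψ (x, t) ∂volume ∂volume)
      = ∫ t, ∫ x, S.indicator ψ (x, t) ∂volume ∂volume := by
    exact integral_integral_swap (f := fun x t => S.indicator ψ (x, t)) hΦint
  -- step 4 : identify the right-hand side
  have e2 : (∫ t, (starRingEnd ℂ) (∫ x in Set.Ici t, tr g x) * tr f t ∂volume)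
      = ∫ t, (starRingEnd ℂ) (prim g 1 - prim g t) * (f : ℝ → ℂ) t ∂ν := by
    rw [← integral_indicator measurableSet_Icc]
    refine integral_congr_ae (Filter.Eventually.of_forall fun t => ?_)
    show (starRingEnd ℂ) (∫ x in Set.Ici t, tr g x) * tr f t
      = Set.indicator (Set.Icc (0:ℝ) 1)
          (fun t => (starRingEnd ℂ) (prim g 1 - prim g t) * (f : ℝ → ℂ) t) t
    by_cases hmem : t ∈ Set.Icc (0:ℝ) 1
    · rw [Set.indicator_of_mem hmem, integral_Ici_tr g hmem, tr, Set.indicator_of_mem hmem]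
    · rw [Set.indicator_of_notMem hmem]
      have h0 : tr f t = 0 := Set.indicator_of_notMem hmem _
      rw [h0, mul_zero]
  calc (inner ℂ g (V f) : ℂ)
      = ∫ x, (starRingEnd ℂ) (tr g x) * (∫ t in Set.Iic x, tr f t) ∂volume := e1
    _ = ∫ x, ∫ t, S.indicator ψ (x, t) ∂volume ∂volume :=
        integral_congr_ae (Filter.Eventually.of_forall fun x => (sec1 x).symm)
    _ = ∫ t, ∫ x, S.indicator ψ (x, t) ∂volume ∂volume := swap
    _ = ∫ t, (starRingEnd ℂ) (∫ x in Set.Ici t, tr g x) * tr f t ∂volume :=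
        integral_congr_ae (Filter.Eventually.of_forall fun t => sec2 t)
    _ = ∫ t, (starRingEnd ℂ) (prim g 1 - prim g t) * (f : ℝ → ℂ) t ∂ν := e2

lemma adjoint_coeFn (V : E →L[ℂ] E) (hV : IsVolterra V) (g : E) :
    (ContinuousLinearMap.adjoint V g : ℝ → ℂ) =ᵐ[ν] fun x => prim g 1 - prim g x := by
  have hmem : MemLp (fun x => prim g 1 - prim g x) 2 ν :=
    memL2_of_continuous (continuous_const.sub (continuous_prim g))
  have key : ContinuousLinearMap.adjoint V g = hmem.toLp _ := by
    refine ext_inner_right ℂ fun f => ?_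
    rw [ContinuousLinearMap.adjoint_inner_left, inner_V_eq V hV f g,
      MeasureTheory.L2.inner_def]
    refine integral_congr_ae ?_
    filter_upwards [hmem.coeFn_toLp] with x hx
    rw [RCLike.inner_apply, hx, mul_comm]
  rw [key]
  exact hmem.coeFn_toLp


lemma imV_coeFn (V : E →L[ℂ] E) (hV : IsVolterra V) (f : E) :
    (((((2 * Complex.I)⁻¹ : ℂ) • (V - ContinuousLinearMap.adjoint V)) f : E) : ℝ → ℂ)
      =ᵐ[ν] fun x => (2 * Complex.I)⁻¹ * (2 * prim f x - prim f 1) := by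
  have h3 : ((((2 * Complex.I)⁻¹ : ℂ) • (V - ContinuousLinearMap.adjoint V)) f : E)
      = ((2 * Complex.I)⁻¹ : ℂ) • (V f - ContinuousLinearMap.adjoint V f) := by
    simp [ContinuousLinearMap.smul_apply, ContinuousLinearMap.sub_apply]
  rw [h3]
  filter_upwards [Lp.coeFn_smul ((2*Complex.I)⁻¹ : ℂ) (V f - ContinuousLinearMap.adjoint V f),
    Lp.coeFn_sub (V f) (ContinuousLinearMap.adjoint V f), hV f, adjoint_coeFn V hV f,
    ae_restrict_mem measurableSet_Icc] with x e1 e2 e3 e4 hx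
  rw [e1, Pi.smul_apply, e2, Pi.sub_apply, e3, e4, ← prim_eq_interval f hx, smul_eq_mul]
  ring

lemma exp_odd (m : ℤ) : Complex.exp ((2*(m:ℂ)+1) * (Real.pi : ℂ) * Complex.I) = -1 := by
  have h : ((2*(m:ℂ)+1)) * (Real.pi : ℂ) * Complex.I
      = (m:ℂ) * (2 * (Real.pi : ℂ) * Complex.I) + (Real.pi : ℂ) * Complex.I := by ring
  rw [h, Complex.exp_add, Complex.exp_int_mul_two_pi_mul_I, Complex.exp_pi_mul_I, one_mul]

lemma exp_eq_neg_one {a : ℂ} (h : Complex.exp a = -1) :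
    ∃ m : ℤ, a = (2*(m:ℂ)+1) * (Real.pi : ℂ) * Complex.I := by
  have h2 : Complex.exp (a - (Real.pi : ℂ) * Complex.I) = 1 := by
    rw [Complex.exp_sub, h, Complex.exp_pi_mul_I, neg_div_neg_eq, one_div_one]
  rw [Complex.exp_eq_one_iff] at h2
  obtain ⟨n, hn⟩ := h2
  refine ⟨n, ?_⟩
  have : a = (n:ℂ) * (2 * (Real.pi : ℂ) * Complex.I) + (Real.pi : ℂ) * Complex.I := by
    linear_combination hn
  rw [this]; ring


lemma prim_toLp (u : ℝ → ℂ) (hu : MemLp u 2 ν) {x : ℝ} (hx : x ∈ Set.Icc (0:ℝ) 1) :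
    prim (hu.toLp u) x = ∫ t in (0:ℝ)..x, u t := by
  have h1 : ∀ᵐ t ∂(volume : Measure ℝ), t ∈ Set.Icc (0:ℝ) 1 →
      ((hu.toLp u : E) : ℝ → ℂ) t = u t :=
    (ae_restrict_iff' measurableSet_Icc).1 hu.coeFn_toLp
  rw [prim, intervalIntegral.integral_of_le hx.1, intervalIntegral.integral_of_le hx.1]
  refine setIntegral_congr_ae measurableSet_Ioc ?_
  filter_upwards [h1] with t ht hmem
  have h2 : t ∈ Set.Icc (0:ℝ) 1 := ⟨hmem.1.le, hmem.2.trans hx.2⟩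
  rw [tr, Set.indicator_of_mem h2, ht h2]

lemma exp_deriv (a : ℂ) (x : ℝ) :
    HasDerivAt (fun s : ℝ => Complex.exp (a * s)) (Complex.exp (a * x) * a) x := by
  have hd0 : HasDerivAt (fun s : ℝ => a * (s : ℂ)) a x := by
    simpa using (Complex.ofRealCLM.hasDerivAt (x := x)).const_mul a
  exact hd0.cexp

lemma integral_exp (a : ℂ) (ha : a ≠ 0) (x : ℝ) :
    (∫ t in (0:ℝ)..x, Complex.exp (a * t)) = (Complex.exp (a * x) - 1) / a := by
  have h1 : ∀ t ∈ Set.uIcc (0:ℝ) x,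
      HasDerivAt (fun s : ℝ => Complex.exp (a * s) / a) (Complex.exp (a * t)) t := by
    intro t _
    have := (exp_deriv a t).div_const a
    simpa [mul_div_cancel_right₀ _ ha] using this
  have h2 : Continuous fun t : ℝ => Complex.exp (a * t) :=
    Complex.continuous_exp.comp (continuous_const.mul Complex.continuous_ofReal)
  rw [intervalIntegral.integral_eq_sub_of_hasDerivAt h1 (h2.intervalIntegrable _ _)]
  simp [Complex.exp_zero, sub_div]

lemma backward (V : E →L[ℂ] E) (hV : IsVolterra V) (n : ℤ) :
    Module.End.HasEigenvalue
      ((((2 * Complex.I)⁻¹ : ℂ) • (V - ContinuousLinearMap.adjoint V) : E →L[ℂ] E) : E →ₗ[ℂ] E)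
      (1 / ((2 * (n : ℂ) + 1) * (Real.pi : ℂ))) := by
  set μ : ℂ := 1 / ((2 * (n : ℂ) + 1) * (Real.pi : ℂ)) with hμdef
  have hπ : (Real.pi : ℂ) ≠ 0 := Complex.ofReal_ne_zero.2 Real.pi_ne_zero
  have hodd : (2 * (n : ℂ) + 1) ≠ 0 := by
    have h1 : ((2 * n + 1 : ℤ) : ℂ) ≠ 0 := Int.cast_ne_zero.2 (by omega)
    push_cast at h1; exact h1
  have hμ0 : μ ≠ 0 := by
    rw [hμdef]
    exact one_div_ne_zero (mul_ne_zero hodd hπ)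
  set a : ℂ := -Complex.I / μ with hadef
  have ha0 : a ≠ 0 := div_ne_zero (neg_ne_zero.2 Complex.I_ne_zero) hμ0
  have hexpa : Complex.exp a = -1 := by
    have h1 : a = (2 * ((-n-1 : ℤ) : ℂ) + 1) * (Real.pi : ℂ) * Complex.I := by
      rw [hadef, hμdef]
      push_cast
      field_simp
      ring
    rw [h1]
    exact exp_odd (-n-1)
  set f₀ : ℝ → ℂ := fun x => Complex.exp (a * x) with hf₀def
  have hf₀c : Continuous f₀ :=
    Complex.continuous_exp.comp (continuous_const.mul Complex.continuous_ofReal)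
  have hmem : MemLp f₀ 2 ν := memL2_of_continuous hf₀c
  set F : E := hmem.toLp f₀ with hFdef
  have hν : (ν : Measure ℝ) ≠ 0 := by
    intro h
    have h2 : (ν : Measure ℝ) Set.univ = 0 := by rw [h]; simp
    rw [Measure.restrict_apply_univ, Real.volume_Icc] at h2
    norm_num at h2
  have hF0 : F ≠ 0 := by
    intro hc
    have h1 : f₀ =ᵐ[ν] 0 := by
      have h2 := hmem.coeFn_toLp
      rw [← hFdef, hc] at h2
      exact h2.symm.trans (Lp.coeFn_zero ℂ 2 ν)
    haveI : (ae (ν : Measure ℝ)).NeBot := ae_neBot.2 hν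
    obtain ⟨x, hx⟩ := h1.exists
    exact Complex.exp_ne_zero _ hx
  have hprim : ∀ x ∈ Set.Icc (0:ℝ) 1, prim F x = (Complex.exp (a * x) - 1) / a := by
    intro x hx
    rw [hFdef, prim_toLp f₀ hmem hx, integral_exp a ha0 x]
  have heq : ((((2 * Complex.I)⁻¹ : ℂ) • (V - ContinuousLinearMap.adjoint V)) F : E) = μ • F := by
    apply Lp.ext
    filter_upwards [imV_coeFn V hV F, Lp.coeFn_smul μ F, hmem.coeFn_toLp,
      ae_restrict_mem measurableSet_Icc] with x e1 e2 e3 hx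
    rw [e1, e2, Pi.smul_apply, e3, smul_eq_mul]
    show (2 * Complex.I)⁻¹ * (2 * prim F x - prim F 1) = μ * f₀ x
    rw [hprim x hx, hprim 1 (by norm_num)]
    simp only [Complex.ofReal_one, mul_one]
    rw [hexpa, hf₀def]
    show (2 * Complex.I)⁻¹ * (2 * ((Complex.exp (a * x) - 1) / a) - (-1 - 1) / a)
        = μ * Complex.exp (a * x)
    have hIa : μ * a = -Complex.I := by
      rw [hadef]; field_simp
    clear_value a μ
    have h2I : (2 * Complex.I) ≠ 0 := mul_ne_zero two_ne_zero Complex.I_ne_zero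
    field_simp
    linear_combination (-2 * Complex.exp (a * (x:ℝ)) * Complex.I) * hIa
      + (2 * Complex.exp (a * (x:ℝ))) * Complex.I_mul_I
  have hev : Module.End.HasEigenvector
      ((((2 * Complex.I)⁻¹ : ℂ) • (V - ContinuousLinearMap.adjoint V) : E →L[ℂ] E) : E →ₗ[ℂ] E)
      μ F := by
    refine ⟨Module.End.mem_eigenspace_iff.2 ?_, hF0⟩
    rw [ContinuousLinearMap.coe_coe]
    exact heq
  exact Module.End.hasEigenvalue_of_hasEigenvector hev


lemma setIntegral_null {s : Set ℝ} (hs : volume s = 0) (h : ℝ → ℂ) :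
    ∫ t in s, h t = 0 := by
  rw [Measure.restrict_eq_zero.2 hs, integral_zero_measure]

lemma forward (V : E →L[ℂ] E) (hV : IsVolterra V) (μ : ℂ)
    (hμev : Module.End.HasEigenvalue
      ((((2 * Complex.I)⁻¹ : ℂ) • (V - ContinuousLinearMap.adjoint V) : E →L[ℂ] E) : E →ₗ[ℂ] E) μ) :
    ∃ n : ℤ, μ = 1 / ((2 * (n : ℂ) + 1) * (Real.pi : ℂ)) := by
  obtain ⟨f, hfmem, hf0⟩ := hμev.exists_hasEigenvector
  have heq : ((((2 * Complex.I)⁻¹ : ℂ) • (V - ContinuousLinearMap.adjoint V)) f : E) = μ • f := by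
    have h := Module.End.mem_eigenspace_iff.1 hfmem
    rwa [ContinuousLinearMap.coe_coe] at h
  have hae : ∀ᵐ x ∂ν, μ * (f : ℝ → ℂ) x = (2 * Complex.I)⁻¹ * (2 * prim f x - prim f 1) := by
    have h1 := imV_coeFn V hV f
    rw [heq] at h1
    filter_upwards [h1, Lp.coeFn_smul μ f] with x e1 e2
    rw [e2] at e1
    simpa using e1
  have h2I : (2 * Complex.I) ≠ 0 := mul_ne_zero two_ne_zero Complex.I_ne_zero
  by_cases hμ0 : μ = 0
  · exfalso
    -- the primitive is a.e. constant
    have hPae : (fun x => prim f x) =ᵐ[ν] fun _ => prim f 1 / 2 := by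
      filter_upwards [hae] with x hx
      rw [hμ0, zero_mul] at hx
      have h3 : (2 * Complex.I)⁻¹ * (2 * prim f x - prim f 1) = 0 := hx.symm
      rcases mul_eq_zero.1 h3 with h | h
      · exact absurd h (inv_ne_zero h2I)
      · show prim f x = prim f 1 / 2
        linear_combination h / 2
    have hP : Set.EqOn (fun x => prim f x) (fun _ => prim f 1 / 2) (Set.Icc 0 1) :=
      Measure.eqOn_Icc_of_ae_eq (volume : Measure ℝ) (by norm_num) hPae
        (continuous_prim f).continuousOn continuousOn_const
    have hC : prim f 1 = 0 := by
      have h0 := hP (Set.left_mem_Icc.2 zero_le_one)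
      simp only [prim_zero] at h0
      have h1 := hP (Set.right_mem_Icc.2 zero_le_one)
      -- h0 : 0 = prim f 1 / 2
      linear_combination -2 * h0
    have hPicc : ∀ x ∈ Set.Icc (0:ℝ) 1, prim f x = 0 := by
      intro x hx
      have h := hP hx
      simp only at h
      rw [h, hC, zero_div]
    -- extend to all of ℝ
    have hPall : ∀ x : ℝ, prim f x = 0 := by
      intro x
      rcases le_or_gt x 0 with h | h
      · rcases eq_or_lt_of_le h with rfl | h
        · exact prim_zero f
        · have h4 : Set.Ioc x 0 ∩ Set.Icc (0:ℝ) 1 = {0} := by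
            ext t
            simp only [Set.mem_inter_iff, Set.mem_Ioc, Set.mem_Icc, Set.mem_singleton_iff]
            constructor
            · rintro ⟨⟨h1, h2⟩, h3, h5⟩
              exact le_antisymm h2 h3
            · rintro rfl; exact ⟨⟨h, le_refl 0⟩, le_refl 0, zero_le_one⟩
          rw [prim, intervalIntegral.integral_symm x 0, intervalIntegral.integral_of_le h.le,
            tr, setIntegral_indicator measurableSet_Icc, h4,
            setIntegral_null Real.volume_singleton, neg_zero]
      · rcases le_or_gt x 1 with h1 | h1
        · exact hPicc x ⟨h.le, h1⟩
        · have h4 : Set.Ioc (1:ℝ) x ∩ Set.Icc (0:ℝ) 1 = ∅ := by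
            ext t
            simp only [Set.mem_inter_iff, Set.mem_Ioc, Set.mem_Icc, Set.mem_empty_iff_false,
              iff_false]
            rintro ⟨⟨h5, h6⟩, h7, h8⟩
            linarith
          have h5 : prim f x = prim f 1 + ∫ t in (1:ℝ)..x, tr f t := by
            rw [prim, prim, intervalIntegral.integral_add_adjacent_intervals
              ((integrable_tr f).intervalIntegrable) ((integrable_tr f).intervalIntegrable)]
          rw [h5, hC, zero_add, intervalIntegral.integral_of_le h1.le,
            tr, setIntegral_indicator measurableSet_Icc, h4, setIntegral_null measure_empty]
    -- all interval integrals of tr f vanish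
    have hIoc0 : ∀ u v : ℝ, u ≤ v → (∫ t in Set.Ioc u v, tr f t) = 0 := by
      intro u v huv
      rw [← intervalIntegral.integral_of_le huv]
      have h6 := intervalIntegral.integral_interval_sub_left
        ((integrable_tr f).intervalIntegrable (a := 0) (b := v))
        ((integrable_tr f).intervalIntegrable (a := 0) (b := u))
      rw [← h6]
      show prim f v - prim f u = 0
      rw [hPall, hPall, sub_zero]
    -- Lebesgue differentiation
    have hloc : LocallyIntegrable (tr f) volume := (integrable_tr f).locallyIntegrable
    have hld := (IsUnifLocDoublingMeasure.vitaliFamily (volume : Measure ℝ) 1).ae_tendsto_average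
      hloc
    have htr0 : tr f =ᵐ[volume] 0 := by
      filter_upwards [hld] with x hx
      have h2 : Filter.Tendsto (fun y => ⨍ t in Set.Icc x y, tr f t ∂volume)
          (nhdsWithin x (Set.Ioi x)) (nhds (tr f x)) :=
        hx.comp (Real.tendsto_Icc_vitaliFamily_right x)
      have h3 : (fun y => ⨍ t in Set.Icc x y, tr f t ∂volume) = fun _ => (0:ℂ) := by
        funext y
        rcases le_or_gt x y with hxy | hxy
        · rw [setAverage_eq, MeasureTheory.integral_Icc_eq_integral_Ioc, hIoc0 x y hxy,
            smul_zero]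
        · rw [Set.Icc_eq_empty (not_le.2 hxy)]
          simp
      rw [h3] at h2
      exact tendsto_nhds_unique h2 tendsto_const_nhds
    have hfz : (f : ℝ → ℂ) =ᵐ[ν] 0 := (tr_ae f).symm.trans (ae_restrict_of_ae htr0)
    exact hf0 (Lp.eq_zero_iff_ae_eq_zero.2 hfz)
  · -- μ ≠ 0
    set C : ℂ := prim f 1 with hCdef
    set φ : ℝ → ℂ := fun x => μ⁻¹ * ((2 * Complex.I)⁻¹ * (2 * prim f x - C)) with hφdef
    have hφc : Continuous φ := by
      apply continuous_const.mul
      apply continuous_const.mul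
      exact (continuous_const.mul (continuous_prim f)).sub continuous_const
    have hfφ : (f : ℝ → ℂ) =ᵐ[ν] φ := by
      filter_upwards [hae] with x hx
      have : (f : ℝ → ℂ) x = μ⁻¹ * (μ * (f : ℝ → ℂ) x) := by
        field_simp
      rw [this, hx]
    set G : ℝ → ℂ := fun x => ∫ t in (0:ℝ)..x, φ t with hGdef
    have hGd : ∀ x : ℝ, HasDerivAt G (φ x) x := fun x =>
      (hφc.integral_hasStrictDerivAt 0 x).hasDerivAt
    have hGc : Continuous G := continuous_iff_continuousAt.2 fun x => (hGd x).continuousAt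
    have hG0 : G 0 = 0 := intervalIntegral.integral_same
    have hGP : ∀ x ∈ Set.Icc (0:ℝ) 1, prim f x = G x := by
      intro x hx
      have h5 : ∀ᵐ t ∂(volume : Measure ℝ), t ∈ Set.Icc (0:ℝ) 1 → tr f t = φ t :=
        (ae_restrict_iff' measurableSet_Icc).1 ((tr_ae f).trans hfφ)
      show prim f x = ∫ t in (0:ℝ)..x, φ t
      rw [prim, intervalIntegral.integral_of_le hx.1, intervalIntegral.integral_of_le hx.1]
      refine setIntegral_congr_ae measurableSet_Ioc ?_
      filter_upwards [h5] with t ht hmem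
      exact ht ⟨hmem.1.le, hmem.2.trans hx.2⟩
    set a : ℂ := 2 * μ⁻¹ * (2 * Complex.I)⁻¹ with hadef
    have ha0 : a ≠ 0 := by
      apply mul_ne_zero (mul_ne_zero two_ne_zero (inv_ne_zero hμ0)) (inv_ne_zero h2I)
    have hφG : ∀ x ∈ Set.Icc (0:ℝ) 1, φ x = a * G x - a * (C / 2) := by
      intro x hx
      show μ⁻¹ * ((2 * Complex.I)⁻¹ * (2 * prim f x - C)) = a * G x - a * (C / 2)
      rw [hGP x hx, hadef]
      ring
    set H : ℝ → ℂ := fun x => Complex.exp (-a * x) * (G x - C / 2) with hHdef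
    have hHc : Continuous H := by
      apply Continuous.mul
      · exact Complex.continuous_exp.comp (continuous_const.mul Complex.continuous_ofReal)
      · exact hGc.sub continuous_const
    have hHd : ∀ x ∈ Set.Ico (0:ℝ) 1, HasDerivWithinAt H 0 (Set.Ici x) x := by
      intro x hx
      have h1 : HasDerivAt (fun s : ℝ => Complex.exp (-a * s))
          (Complex.exp (-a * x) * (-a)) x := exp_deriv (-a) x
      have h2 := h1.mul ((hGd x).sub_const (C / 2))
      have h3 : Complex.exp (-a * x) * (-a) * (G x - C / 2) + Complex.exp (-a * x) * φ x
          = 0 := by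
        rw [hφG x ⟨hx.1, hx.2.le⟩]
        ring
      rw [h3] at h2
      exact h2.hasDerivWithinAt
    have hHconst := constant_of_has_deriv_right_zero (hHc.continuousOn) hHd
    have hkey : ∀ x ∈ Set.Icc (0:ℝ) 1, G x = C / 2 - C / 2 * Complex.exp (a * x) := by
      intro x hx
      have h6 := hHconst x hx
      show G x = C / 2 - C / 2 * Complex.exp (a * x)
      have h7 : Complex.exp (-a * x) * (G x - C / 2)
          = Complex.exp (-a * 0) * (G 0 - C / 2) := h6
      rw [hG0] at h7
      have h8 : G x - C / 2 = Complex.exp (a * x) * (Complex.exp (-a * x) * (G x - C / 2)) := by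
        rw [← mul_assoc, ← Complex.exp_add]
        have h9 : a * (x:ℝ) + -a * (x:ℝ) = 0 := by ring
        rw [h9, Complex.exp_zero, one_mul]
      rw [h7] at h8
      simp only [Complex.ofReal_zero, mul_zero, Complex.exp_zero, one_mul, zero_sub] at h8
      linear_combination h8
    have hC1 : C = C / 2 - C / 2 * Complex.exp a := by
      have h1 := hkey 1 (Set.right_mem_Icc.2 zero_le_one)
      have h2 := hGP 1 (Set.right_mem_Icc.2 zero_le_one)
      rw [← hCdef] at h2
      rw [← h2] at h1
      simpa using h1
    by_cases hC0 : C = 0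
    · exfalso
      have hφ0 : ∀ x ∈ Set.Icc (0:ℝ) 1, φ x = 0 := by
        intro x hx
        rw [hφG x hx, hkey x hx, hC0]
        ring
      have hfz : (f : ℝ → ℂ) =ᵐ[ν] 0 := by
        filter_upwards [hfφ, ae_restrict_mem measurableSet_Icc] with x h1 h2
        rw [h1, hφ0 x h2]
        rfl
      exact hf0 (Lp.eq_zero_iff_ae_eq_zero.2 hfz)
    · have hexpa : Complex.exp a = -1 := by
        have h9 : C / 2 * Complex.exp a = C / 2 * (-1) := by
          linear_combination hC1
        exact mul_left_cancel₀ (div_ne_zero hC0 two_ne_zero) h9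
      obtain ⟨m, hm⟩ := exp_eq_neg_one hexpa
      refine ⟨-1 - m, ?_⟩
      have h10 : μ * a * Complex.I = 1 := by
        rw [hadef]
        field_simp
      rw [hm] at h10
      have hπ : (Real.pi : ℂ) ≠ 0 := Complex.ofReal_ne_zero.2 Real.pi_ne_zero
      have hm0 : (2 * ((-1 - m : ℤ) : ℂ) + 1) ≠ 0 := by
        have h1 : ((2 * (-1 - m) + 1 : ℤ) : ℂ) ≠ 0 := Int.cast_ne_zero.2 (by omega)
        intro hc
        apply h1
        push_cast [Int.cast_sub, Int.cast_neg] at hc ⊢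
        linear_combination hc
      rw [eq_div_iff (mul_ne_zero hm0 hπ)]
      push_cast
      linear_combination h10 + (-μ * (2 * (m:ℂ) + 1) * (Real.pi:ℂ)) * Complex.I_mul_I

end VolterraAux

theorem im_volterra_eigenvalues (V : E →L[ℂ] E) (hV : IsVolterra V) :
    {μ : ℂ | Module.End.HasEigenvalue
        ((((2 * Complex.I)⁻¹ : ℂ) • (V - ContinuousLinearMap.adjoint V) : E →L[ℂ] E) : E →ₗ[ℂ] E) μ} =
      {μ : ℂ | ∃ n : ℤ, μ = 1 / ((2 * (n : ℂ) + 1) * (Real.pi : ℂ))} := by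
  ext μ
  simp only [Set.mem_setOf_eq]
  constructor
  · exact VolterraAux.forward V hV μ
  · rintro ⟨n, rfl⟩
    exact VolterraAux.backward V hV n
end
end

section
/- The non-zero eigenvalues of Re V³ = (V³ + V*³)/2 are exactly −1/24, 1/48 + √5/80, and 1/48 − √5/80. -/
open MeasureTheory Complex ContinuousLinearMap Set

noncomputable section

notation "μm" => volume.restrict (Set.Icc (0:ℝ) 1)

lemma integrable_E (f : E) : Integrable (f : ℝ → ℂ) μm :=
  (Lp.memLp f).integrable (by norm_num)

lemma ae_mem_le (j : ℕ) : ∀ᵐ (x : ℝ) ∂μm, ‖((x:ℝ):ℂ)^j‖ ≤ 1 := by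
  filter_upwards [ae_restrict_mem measurableSet_Icc] with x hx
  rw [norm_pow]
  apply pow_le_one₀ (norm_nonneg _)
  simp only [Complex.norm_real, Real.norm_eq_abs, abs_le]
  constructor <;> [linarith [hx.1, hx.2]; linarith [hx.1, hx.2]]

lemma integrable_mom (f : ℝ → ℂ) (hf : Integrable f μm) (j : ℕ) :
    Integrable (fun (x:ℝ) => ((x:ℝ):ℂ)^j * f x) μm :=
  hf.bdd_mul ((Complex.continuous_ofReal.pow j).aestronglyMeasurable) (ae_mem_le j)

lemma tri (f : ℝ → ℂ) (hf : Integrable f μm) (n : ℕ) {x : ℝ} (hx : x ∈ Set.Icc (0:ℝ) 1) :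
    ∫ t in Set.Ioc (0:ℝ) x, (∫ s in Set.Ioc (0:ℝ) t, (((t-s)^n : ℝ):ℂ) * f s) =
    ∫ s in Set.Ioc (0:ℝ) x, ((((x-s)^(n+1)/(n+1)) : ℝ):ℂ) * f s := by
  obtain ⟨hx0, hx1⟩ := hx
  have hsub : Set.Ioc (0:ℝ) x ⊆ Set.Icc 0 1 := fun t ht => ⟨le_of_lt ht.1, ht.2.trans hx1⟩
  have hfI : IntegrableOn f (Set.Ioc 0 x) := (show IntegrableOn f (Set.Icc 0 1) volume from hf).mono_set hsub
  set ρ := volume.restrict (Set.Ioc (0:ℝ) x) with hρ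
  haveI : IsFiniteMeasure ρ := ⟨by rw [hρ, Measure.restrict_apply_univ]; exact measure_Ioc_lt_top⟩
  set F : ℝ × ℝ → ℂ :=
    {q : ℝ × ℝ | q.2 ≤ q.1}.indicator (fun q => (((q.1-q.2)^n : ℝ):ℂ) * f q.2) with hF
  have hFmeas : AEStronglyMeasurable F (ρ.prod ρ) := by
    apply AEStronglyMeasurable.indicator
    · exact AEStronglyMeasurable.mul
        (Continuous.aestronglyMeasurable (by continuity))
        (hfI.aestronglyMeasurable.comp_quasiMeasurePreserving
          Measure.quasiMeasurePreserving_snd)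
    · exact measurableSet_le measurable_snd measurable_fst
  have hFint : Integrable F (ρ.prod ρ) := by
    apply Integrable.mono' ((integrable_const (1:ℝ)).mul_prod hfI.norm) hFmeas
    have hmem : ∀ᵐ p ∂(ρ.prod ρ), p ∈ Set.Ioc (0:ℝ) x ×ˢ Set.Ioc (0:ℝ) x := by
      rw [hρ, Measure.prod_restrict]
      exact ae_restrict_mem (measurableSet_Ioc.prod measurableSet_Ioc)
    filter_upwards [hmem] with p hp
    rcases hp with ⟨hp1, hp2⟩
    by_cases h : p.2 ≤ p.1
    · have hmem2 : p ∈ {q : ℝ × ℝ | q.2 ≤ q.1} := h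
      rw [hF, Set.indicator_of_mem hmem2]
      rw [norm_mul, one_mul]
      apply mul_le_of_le_one_left (norm_nonneg _)
      rw [Complex.norm_real, Real.norm_eq_abs]
      rw [_root_.abs_pow]
      apply pow_le_one₀ (abs_nonneg _)
      rw [abs_le]
      constructor <;> [nlinarith [hp1.1, hp1.2, hp2.1, hp2.2];
        nlinarith [hp1.1, hp1.2, hp2.1, hp2.2]]
    · have hmem2 : p ∉ {q : ℝ × ℝ | q.2 ≤ q.1} := h
      rw [hF, Set.indicator_of_notMem hmem2, norm_zero, one_mul]
      positivity
  have step1 : ∀ t ∈ Set.Ioc (0:ℝ) x,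
      (∫ s in Set.Ioc (0:ℝ) t, (((t-s)^n : ℝ):ℂ) * f s) = ∫ s in Set.Ioc (0:ℝ) x, F (t, s) := by
    intro t ht
    have : ∀ s : ℝ, F (t, s) = (Set.Iic t).indicator (fun s => (((t-s)^n : ℝ):ℂ) * f s) s := by
      intro s
      simp only [hF, Set.indicator, Set.mem_setOf_eq, Set.mem_Iic]
    simp_rw [this]
    rw [setIntegral_indicator measurableSet_Iic]
    congr 1
    rw [Set.Ioc_inter_Iic, min_eq_right ht.2]
  have step3 : ∀ s ∈ Set.Ioc (0:ℝ) x,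
      (∫ t in Set.Ioc (0:ℝ) x, F (t, s)) = ((((x-s)^(n+1)/(n+1)) : ℝ):ℂ) * f s := by
    intro s hs
    have : ∀ t : ℝ, F (t, s) = (Set.Ici s).indicator (fun t => (((t-s)^n : ℝ):ℂ) * f s) t := by
      intro t
      simp only [hF, Set.indicator, Set.mem_setOf_eq, Set.mem_Ici]
    simp_rw [this]
    rw [setIntegral_indicator measurableSet_Ici]
    have hset : Set.Ioc (0:ℝ) x ∩ Set.Ici s = Set.Icc s x := by
      ext t
      simp only [Set.mem_inter_iff, Set.mem_Ioc, Set.mem_Ici, Set.mem_Icc]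
      constructor
      · rintro ⟨⟨h1, h2⟩, h3⟩; exact ⟨h3, h2⟩
      · rintro ⟨h1, h2⟩; exact ⟨⟨lt_of_lt_of_le hs.1 h1, h2⟩, h1⟩
    rw [hset, integral_mul_const]
    congr 1
    rw [integral_Icc_eq_integral_Ioc, ← intervalIntegral.integral_of_le hs.2,
      intervalIntegral.integral_ofReal]
    norm_cast
    rw [intervalIntegral.integral_comp_sub_right (fun u => u^n) s, sub_self,
      integral_pow]
    push_cast
    ring
  calc ∫ t in Set.Ioc (0:ℝ) x, (∫ s in Set.Ioc (0:ℝ) t, (((t-s)^n : ℝ):ℂ) * f s)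
      = ∫ t in Set.Ioc (0:ℝ) x, ∫ s in Set.Ioc (0:ℝ) x, F (t, s) :=
        setIntegral_congr_fun measurableSet_Ioc step1
    _ = ∫ s in Set.Ioc (0:ℝ) x, ∫ t in Set.Ioc (0:ℝ) x, F (t, s) :=
        integral_integral_swap (by exact hFint)
    _ = ∫ s in Set.Ioc (0:ℝ) x, ((((x-s)^(n+1)/(n+1)) : ℝ):ℂ) * f s :=
        setIntegral_congr_fun measurableSet_Ioc step3

lemma ae_Ioc_congr {h k : ℝ → ℂ} (hhk : ∀ᵐ (x:ℝ) ∂μm, h x = k x) {x : ℝ}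
    (hx : x ∈ Set.Icc (0:ℝ) 1) :
    ∫ s in Set.Ioc (0:ℝ) x, h s = ∫ s in Set.Ioc (0:ℝ) x, k s := by
  apply integral_congr_ae
  have h1 : ∀ᵐ (s:ℝ) ∂volume, s ∈ Set.Icc (0:ℝ) 1 → h s = k s :=
    (ae_restrict_iff' measurableSet_Icc).1 hhk
  have h2 : ∀ᵐ (s:ℝ) ∂(volume.restrict (Set.Ioc (0:ℝ) x)), s ∈ Set.Icc (0:ℝ) 1 → h s = k s :=
    ae_restrict_of_ae h1
  filter_upwards [h2, ae_restrict_mem measurableSet_Ioc] with s hs hmem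
  exact hs ⟨le_of_lt hmem.1, hmem.2.trans hx.2⟩

lemma V3_ae (V : E →L[ℂ] E) (hV : IsVolterra V) (f : E) :
    ∀ᵐ (x:ℝ) ∂μm, ((V^3) f : ℝ → ℂ) x
      = ∫ s in Set.Ioc (0:ℝ) x, (((x-s)^2/2 : ℝ):ℂ) * (f : ℝ → ℂ) s := by
  have h1 : ∀ᵐ (x:ℝ) ∂μm, (V f : ℝ → ℂ) x = ∫ s in Set.Ioc (0:ℝ) x, (f : ℝ → ℂ) s := by
    filter_upwards [hV f, ae_restrict_mem measurableSet_Icc] with x h hx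
    rw [h, intervalIntegral.integral_of_le hx.1]
  have h2 : ∀ᵐ (x:ℝ) ∂μm, (V (V f) : ℝ → ℂ) x
      = ∫ s in Set.Ioc (0:ℝ) x, (((x-s) : ℝ):ℂ) * (f : ℝ → ℂ) s := by
    filter_upwards [hV (V f), ae_restrict_mem measurableSet_Icc] with x h hx
    rw [h, intervalIntegral.integral_of_le hx.1, ae_Ioc_congr h1 hx]
    have ht := tri (f : ℝ → ℂ) (integrable_E f) 0 hx
    simp only [pow_zero, Complex.ofReal_one, one_mul] at ht
    rw [ht]
    apply setIntegral_congr_fun measurableSet_Ioc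
    intro s _
    push_cast
    ring
  have h3 : ∀ᵐ (x:ℝ) ∂μm, (V (V (V f)) : ℝ → ℂ) x
      = ∫ s in Set.Ioc (0:ℝ) x, (((x-s)^2/2 : ℝ):ℂ) * (f : ℝ → ℂ) s := by
    filter_upwards [hV (V (V f)), ae_restrict_mem measurableSet_Icc] with x h hx
    rw [h, intervalIntegral.integral_of_le hx.1, ae_Ioc_congr h2 hx]
    have ht := tri (f : ℝ → ℂ) (integrable_E f) 1 hx
    have heq : ∀ t ∈ Set.Ioc (0:ℝ) x,
        (∫ s in Set.Ioc (0:ℝ) t, (((t-s) : ℝ):ℂ) * (f : ℝ → ℂ) s)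
        = ∫ s in Set.Ioc (0:ℝ) t, (((t-s)^1 : ℝ):ℂ) * (f : ℝ → ℂ) s := by
      intro t _
      apply setIntegral_congr_fun measurableSet_Ioc
      intro s _
      norm_num
    rw [setIntegral_congr_fun measurableSet_Ioc heq, ht]
    apply setIntegral_congr_fun measurableSet_Ioc
    intro s _
    push_cast
    ring
  have hpow : (V^3) f = V (V (V f)) := by
    simp [pow_succ, ContinuousLinearMap.mul_apply]
  rw [hpow]
  exact h3

lemma sqswap (phi psi : ℝ → ℂ) (hphi : Integrable phi μm) (hpsi : Integrable psi μm) :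
    ((∫ x, (∫ s in Set.Ioc (0:ℝ) x, (((x-s)^2/2 : ℝ):ℂ) * psi s) * phi x ∂μm)
      = ∫ x, (∫ s in Set.Ioc x (1:ℝ), (((s-x)^2/2 : ℝ):ℂ) * phi s) * psi x ∂μm)
    ∧ Integrable (fun x => (∫ s in Set.Ioc x (1:ℝ), (((s-x)^2/2 : ℝ):ℂ) * phi s) * psi x) μm := by
  set H : ℝ × ℝ → ℂ :=
    {q : ℝ × ℝ | q.2 ≤ q.1}.indicator
      (fun q => (((q.1-q.2)^2/2 : ℝ):ℂ) * psi q.2 * phi q.1) with hH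
  have hHmeas : AEStronglyMeasurable H ((volume.restrict (Set.Icc (0:ℝ) 1)).prod (volume.restrict (Set.Icc (0:ℝ) 1))) := by
    apply AEStronglyMeasurable.indicator
    · exact (AEStronglyMeasurable.mul
        (Continuous.aestronglyMeasurable (by continuity))
        (hpsi.aestronglyMeasurable.comp_quasiMeasurePreserving
          Measure.quasiMeasurePreserving_snd)).mul
        (hphi.aestronglyMeasurable.comp_quasiMeasurePreserving
          Measure.quasiMeasurePreserving_fst)
    · exact measurableSet_le measurable_snd measurable_fst
  have hHint : Integrable H ((volume.restrict (Set.Icc (0:ℝ) 1)).prod (volume.restrict (Set.Icc (0:ℝ) 1))) := by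
    apply Integrable.mono' (hphi.norm.mul_prod hpsi.norm) hHmeas
    have hmem : ∀ᵐ p ∂((volume.restrict (Set.Icc (0:ℝ) 1)).prod (volume.restrict (Set.Icc (0:ℝ) 1))), p ∈ Set.Icc (0:ℝ) 1 ×ˢ Set.Icc (0:ℝ) 1 := by
      rw [Measure.prod_restrict]
      exact ae_restrict_mem (measurableSet_Icc.prod measurableSet_Icc)
    filter_upwards [hmem] with p hp
    rcases hp with ⟨hp1, hp2⟩
    by_cases h : p.2 ≤ p.1
    · have hmem2 : p ∈ {q : ℝ × ℝ | q.2 ≤ q.1} := h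
      rw [hH, Set.indicator_of_mem hmem2, norm_mul, norm_mul]
      have hK : ‖(((p.1-p.2)^2/2 : ℝ):ℂ)‖ ≤ 1 := by
        rw [Complex.norm_real, Real.norm_eq_abs, _root_.abs_div, _root_.abs_pow]
        rw [div_le_one (by norm_num : (0:ℝ) < |2|)]
        have h1 : |p.1 - p.2| ≤ 1 := by
          rw [abs_le]
          constructor <;> nlinarith [hp1.1, hp1.2, hp2.1, hp2.2]
        have h2 : (0:ℝ) ≤ |p.1 - p.2| := abs_nonneg _
        have h3 : |(2:ℝ)| = 2 := by norm_num
        nlinarith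
      nlinarith [mul_nonneg (norm_nonneg (phi p.1)) (norm_nonneg (psi p.2)),
        norm_nonneg (phi p.1), norm_nonneg (psi p.2), hK,
        mul_nonneg (mul_nonneg (norm_nonneg (((((p.1-p.2)^2/2 : ℝ):ℂ))) ) (norm_nonneg (phi p.1))) (norm_nonneg (psi p.2))]
    · have hmem2 : p ∉ {q : ℝ × ℝ | q.2 ≤ q.1} := h
      rw [hH, Set.indicator_of_notMem hmem2, norm_zero]
      positivity
  have step1 : ∀ x ∈ Set.Icc (0:ℝ) 1,
      (∫ s in Set.Ioc (0:ℝ) x, (((x-s)^2/2 : ℝ):ℂ) * psi s) * phi x = ∫ s, H (x, s) ∂μm := by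
    intro x hx
    have hind : ∀ s : ℝ, H (x, s)
        = (Set.Iic x).indicator (fun s => (((x-s)^2/2 : ℝ):ℂ) * psi s * phi x) s := by
      intro s
      simp only [hH, Set.indicator, Set.mem_setOf_eq, Set.mem_Iic]
    simp_rw [hind]
    have hset : Set.Icc (0:ℝ) 1 ∩ Set.Iic x = Set.Icc 0 x := by
      ext t
      simp only [Set.mem_inter_iff, Set.mem_Icc, Set.mem_Iic]
      constructor
      · rintro ⟨⟨a, b⟩, c⟩; exact ⟨a, c⟩
      · rintro ⟨a, b⟩; exact ⟨⟨a, b.trans hx.2⟩, b⟩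
    rw [setIntegral_indicator measurableSet_Iic, hset,
      integral_Icc_eq_integral_Ioc, integral_mul_const]
  have step3 : ∀ s ∈ Set.Icc (0:ℝ) 1,
      (∫ x, H (x, s) ∂μm) = (∫ t in Set.Ioc s (1:ℝ), (((t-s)^2/2 : ℝ):ℂ) * phi t) * psi s := by
    intro s hs
    have hind : ∀ x : ℝ, H (x, s)
        = (Set.Ici s).indicator (fun x => (((x-s)^2/2 : ℝ):ℂ) * psi s * phi x) x := by
      intro x
      simp only [hH, Set.indicator, Set.mem_setOf_eq, Set.mem_Ici]
    simp_rw [hind]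
    have hset : Set.Icc (0:ℝ) 1 ∩ Set.Ici s = Set.Icc s 1 := by
      ext t
      simp only [Set.mem_inter_iff, Set.mem_Icc, Set.mem_Ici]
      constructor
      · rintro ⟨⟨a, b⟩, c⟩; exact ⟨c, b⟩
      · rintro ⟨a, b⟩; exact ⟨⟨hs.1.trans a, b⟩, a⟩
    rw [setIntegral_indicator measurableSet_Ici, hset,
      integral_Icc_eq_integral_Ioc]
    simp_rw [mul_right_comm _ (psi s) _]
    rw [integral_mul_const]
  have heq1 : (∫ x, (∫ s in Set.Ioc (0:ℝ) x, (((x-s)^2/2 : ℝ):ℂ) * psi s) * phi x ∂μm)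
      = ∫ s, ∫ x, H (x, s) ∂μm ∂μm := by
    rw [← integral_integral_swap (by exact hHint)]
    exact setIntegral_congr_fun measurableSet_Icc step1
  constructor
  · rw [heq1]
    exact setIntegral_congr_fun measurableSet_Icc step3
  · have hint2 : Integrable (fun s => ∫ x, H (x, s) ∂μm) μm := by
      have := (hHint.swap).integral_prod_left
      exact this
    apply hint2.congr
    filter_upwards [ae_restrict_mem measurableSet_Icc] with s hs
    exact step3 s hs

lemma memLp_pow (j : ℕ) : MemLp (fun x : ℝ => ((x:ℝ):ℂ)^j) 2 μm :=
  MemLp.of_bound ((Complex.continuous_ofReal.pow j).aestronglyMeasurable) 1 (ae_mem_le j)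

def q (j : ℕ) : E := (memLp_pow j).toLp _

lemma q_coe (j : ℕ) : (q j : ℝ → ℂ) =ᵐ[μm] fun x : ℝ => ((x:ℝ):ℂ)^j :=
  MemLp.coeFn_toLp _

lemma momq (k : ℕ) : (∫ x, ((x:ℝ):ℂ)^k ∂μm) = 1/(k+1) := by
  rw [integral_Icc_eq_integral_Ioc, ← intervalIntegral.integral_of_le (by norm_num : (0:ℝ) ≤ 1)]
  have h : ∀ x : ℝ, ((x:ℝ):ℂ)^k = (((x^k : ℝ)):ℂ) := by intro x; push_cast; ring
  simp_rw [h]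
  rw [intervalIntegral.integral_ofReal, integral_pow]
  push_cast
  norm_num

local notation "⟪" x ", " y "⟫" => @inner ℂ E _ x y

lemma inner_eq_s8 (g h : E) : ⟪g, h⟫ = ∫ x, (starRingEnd ℂ) ((g : ℝ → ℂ) x) * (h : ℝ → ℂ) x ∂μm := by
  rw [L2.inner_def]
  simp only [RCLike.inner_apply, mul_comm]

lemma ae_K_le {x : ℝ} (hx : x ∈ Set.Icc (0:ℝ) 1) :
    ∀ᵐ (s:ℝ) ∂μm, ‖(((x-s)^2/2 : ℝ):ℂ)‖ ≤ 1 := by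
  filter_upwards [ae_restrict_mem measurableSet_Icc] with s hs
  rw [Complex.norm_real, Real.norm_eq_abs, _root_.abs_div, _root_.abs_pow]
  rw [div_le_one (by norm_num : (0:ℝ) < |2|)]
  have h1 : |x - s| ≤ 1 := by
    rw [abs_le]; constructor <;> nlinarith [hx.1, hx.2, hs.1, hs.2]
  have h2 : (0:ℝ) ≤ |x - s| := abs_nonneg _
  have h3 : |(2:ℝ)| = 2 := by norm_num
  nlinarith

lemma GW (f : ℝ → ℂ) (hf : Integrable f μm) {x : ℝ} (hx : x ∈ Set.Icc (0:ℝ) 1) :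
    (∫ s in Set.Ioc (0:ℝ) x, (((x-s)^2/2 : ℝ):ℂ) * f s)
      + (∫ s in Set.Ioc x (1:ℝ), (((s-x)^2/2 : ℝ):ℂ) * f s)
    = 2⁻¹ * (∫ s, ((s:ℝ):ℂ)^2 * f s ∂μm) - (x:ℂ) * (∫ s, ((s:ℝ):ℂ) * f s ∂μm)
      + 2⁻¹ * ((x:ℂ))^2 * (∫ s, f s ∂μm) := by
  have hKi : Integrable (fun s : ℝ => (((x-s)^2/2 : ℝ):ℂ) * f s) μm := by
    apply hf.bdd_mul _ (ae_K_le hx)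
    exact Continuous.aestronglyMeasurable (by continuity)
  have h1 : IntegrableOn (fun s : ℝ => (((x-s)^2/2 : ℝ):ℂ) * f s) (Set.Ioc 0 x) volume :=
    (show IntegrableOn _ (Set.Icc (0:ℝ) 1) volume from hKi).mono_set
      (fun t ht => ⟨le_of_lt ht.1, ht.2.trans hx.2⟩)
  have h2 : IntegrableOn (fun s : ℝ => (((x-s)^2/2 : ℝ):ℂ) * f s) (Set.Ioc x 1) volume :=
    (show IntegrableOn _ (Set.Icc (0:ℝ) 1) volume from hKi).mono_set
      (fun t ht => ⟨hx.1.trans (le_of_lt ht.1), ht.2⟩)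
  have hW : (∫ s in Set.Ioc x (1:ℝ), (((s-x)^2/2 : ℝ):ℂ) * f s)
      = ∫ s in Set.Ioc x (1:ℝ), (((x-s)^2/2 : ℝ):ℂ) * f s :=
    setIntegral_congr_fun measurableSet_Ioc
      (fun s _ => by rw [show ((s-x)^2 : ℝ) = (x-s)^2 from by ring])
  rw [hW, ← setIntegral_union (Set.Ioc_disjoint_Ioc_of_le le_rfl) measurableSet_Ioc h1 h2,
    Set.Ioc_union_Ioc_eq_Ioc hx.1 hx.2, ← integral_Icc_eq_integral_Ioc]
  have hpt : ∀ s : ℝ, (((x-s)^2/2 : ℝ):ℂ) * f s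
      = (2⁻¹ * (((s:ℝ):ℂ)^2 * f s) - (x:ℂ) * (((s:ℝ):ℂ)^1 * f s))
        + 2⁻¹ * ((x:ℂ))^2 * f s := by
    intro s; push_cast; ring
  simp_rw [hpt]
  have hadd := integral_add (μ := volume.restrict (Set.Icc (0:ℝ) 1))
    (f := fun t : ℝ => 2⁻¹ * (((t:ℝ):ℂ)^2 * f t) - (x:ℂ) * (((t:ℝ):ℂ)^1 * f t))
    (g := fun t : ℝ => 2⁻¹ * ((x:ℂ))^2 * f t)
    (by exact ((integrable_mom f hf 2).const_mul _).sub ((integrable_mom f hf 1).const_mul _))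
    (by exact hf.const_mul _)
  rw [hadd]
  have hsub := integral_sub (μ := volume.restrict (Set.Icc (0:ℝ) 1))
    (f := fun t : ℝ => 2⁻¹ * (((t:ℝ):ℂ)^2 * f t))
    (g := fun t : ℝ => (x:ℂ) * (((t:ℝ):ℂ)^1 * f t))
    (by exact (integrable_mom f hf 2).const_mul _)
    (by exact (integrable_mom f hf 1).const_mul _)
  rw [hsub]
  simp only [integral_const_mul]
  simp only [pow_one]

lemma key_s8 (V : E →L[ℂ] E) (hV : IsVolterra V) (f : E) :
    ((2:ℂ)⁻¹ • (V ^ 3 + ContinuousLinearMap.adjoint (V ^ 3)) : E →L[ℂ] E) f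
      = ((4:ℂ)⁻¹ * ∫ x, ((x:ℝ):ℂ)^2 * (f : ℝ → ℂ) x ∂μm) • q 0
      + (-((2:ℂ)⁻¹) * ∫ x, ((x:ℝ):ℂ) * (f : ℝ → ℂ) x ∂μm) • q 1
      + ((4:ℂ)⁻¹ * ∫ x, (f : ℝ → ℂ) x ∂μm) • q 2 := by
  apply ext_inner_left ℂ
  intro g
  have hfi := integrable_E f
  have hgi := integrable_E g
  have hgc : Integrable (fun x => (starRingEnd ℂ) ((g : ℝ → ℂ) x)) μm := by
    refine hgi.norm.mono' ?_ ?_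
    · exact Complex.continuous_conj.comp_aestronglyMeasurable (Lp.aestronglyMeasurable g)
    · filter_upwards with x
      simp
  rw [ContinuousLinearMap.smul_apply, ContinuousLinearMap.add_apply, inner_smul_right,
    inner_add_right, ContinuousLinearMap.adjoint_inner_right]
  have hI1 : ⟪g, (V^3) f⟫ = ∫ x, (starRingEnd ℂ) ((g : ℝ → ℂ) x)
      * (∫ s in Set.Ioc (0:ℝ) x, (((x-s)^2/2 : ℝ):ℂ) * (f : ℝ → ℂ) s) ∂μm := by
    rw [inner_eq_s8]
    apply integral_congr_ae
    filter_upwards [V3_ae V hV f] with x hx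
    rw [hx]
  have hI1int : Integrable (fun x => (starRingEnd ℂ) ((g : ℝ → ℂ) x)
      * (∫ s in Set.Ioc (0:ℝ) x, (((x-s)^2/2 : ℝ):ℂ) * (f : ℝ → ℂ) s)) μm := by
    have h0 : Integrable (fun x => (starRingEnd ℂ) ((g : ℝ → ℂ) x) * ((V^3) f : ℝ → ℂ) x) μm := by
      have h1 := L2.integrable_inner (𝕜 := ℂ) g ((V^3) f)
      simpa only [RCLike.inner_apply, mul_comm] using h1
    apply h0.congr
    filter_upwards [V3_ae V hV f] with x hx
    rw [hx]
  have hconjswap : ∀ x : ℝ, (starRingEnd ℂ)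
        (∫ s in Set.Ioc (0:ℝ) x, (((x-s)^2/2 : ℝ):ℂ) * (g : ℝ → ℂ) s)
      = ∫ s in Set.Ioc (0:ℝ) x, (((x-s)^2/2 : ℝ):ℂ) * (starRingEnd ℂ) ((g : ℝ → ℂ) s) := by
    intro x
    rw [← integral_conj]
    apply integral_congr_ae
    filter_upwards with s
    simp [map_mul, map_div₀, map_pow, Complex.conj_ofReal, map_ofNat]
  have hsq := sqswap (f : ℝ → ℂ) (fun x => (starRingEnd ℂ) ((g : ℝ → ℂ) x)) hfi hgc
  have hI2 : ⟪(V^3) g, f⟫ = ∫ x, (∫ s in Set.Ioc x (1:ℝ), (((s-x)^2/2 : ℝ):ℂ) * (f : ℝ → ℂ) s)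
      * (starRingEnd ℂ) ((g : ℝ → ℂ) x) ∂μm := by
    rw [inner_eq_s8, ← hsq.1]
    apply integral_congr_ae
    filter_upwards [V3_ae V hV g] with x hx
    rw [hx, hconjswap x]
  rw [hI1, hI2, ← integral_add hI1int hsq.2]
  have hsplit : (∫ x, ((starRingEnd ℂ) ((g : ℝ → ℂ) x)
        * (∫ s in Set.Ioc (0:ℝ) x, (((x-s)^2/2 : ℝ):ℂ) * (f : ℝ → ℂ) s)
      + (∫ s in Set.Ioc x (1:ℝ), (((s-x)^2/2 : ℝ):ℂ) * (f : ℝ → ℂ) s)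
        * (starRingEnd ℂ) ((g : ℝ → ℂ) x)) ∂μm)
      = ∫ x, ((2⁻¹ * (∫ s, ((s:ℝ):ℂ)^2 * (f : ℝ → ℂ) s ∂μm))
            * ((starRingEnd ℂ) ((g : ℝ → ℂ) x) * ((x:ℝ):ℂ)^0)
          + (-(∫ s, ((s:ℝ):ℂ) * (f : ℝ → ℂ) s ∂μm))
            * ((starRingEnd ℂ) ((g : ℝ → ℂ) x) * ((x:ℝ):ℂ)^1)
          + (2⁻¹ * (∫ s, (f : ℝ → ℂ) s ∂μm))
            * ((starRingEnd ℂ) ((g : ℝ → ℂ) x) * ((x:ℝ):ℂ)^2)) ∂μm := by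
    apply integral_congr_ae
    filter_upwards [ae_restrict_mem measurableSet_Icc] with x hx
    have hgw := GW (f : ℝ → ℂ) hfi hx
    calc (starRingEnd ℂ) ((g : ℝ → ℂ) x)
          * (∫ s in Set.Ioc (0:ℝ) x, (((x-s)^2/2 : ℝ):ℂ) * (f : ℝ → ℂ) s)
        + (∫ s in Set.Ioc x (1:ℝ), (((s-x)^2/2 : ℝ):ℂ) * (f : ℝ → ℂ) s)
          * (starRingEnd ℂ) ((g : ℝ → ℂ) x)
        = (starRingEnd ℂ) ((g : ℝ → ℂ) x)
          * ((∫ s in Set.Ioc (0:ℝ) x, (((x-s)^2/2 : ℝ):ℂ) * (f : ℝ → ℂ) s)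
          + (∫ s in Set.Ioc x (1:ℝ), (((s-x)^2/2 : ℝ):ℂ) * (f : ℝ → ℂ) s)) := by ring
      _ = _ := by rw [hgw]; ring
  rw [hsplit]
  have hm0 : Integrable (fun x => (starRingEnd ℂ) ((g : ℝ → ℂ) x) * ((x:ℝ):ℂ)^0) μm := by
    have := integrable_mom _ hgc 0
    apply this.congr
    filter_upwards with x
    ring
  have hm1 : Integrable (fun x => (starRingEnd ℂ) ((g : ℝ → ℂ) x) * ((x:ℝ):ℂ)^1) μm := by
    have := integrable_mom _ hgc 1
    apply this.congr
    filter_upwards with x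
    ring
  have hm2 : Integrable (fun x => (starRingEnd ℂ) ((g : ℝ → ℂ) x) * ((x:ℝ):ℂ)^2) μm := by
    have := integrable_mom _ hgc 2
    apply this.congr
    filter_upwards with x
    ring
  have haddA := integral_add (μ := volume.restrict (Set.Icc (0:ℝ) 1))
    (f := fun x : ℝ => (2⁻¹ * ∫ s, ((s:ℝ):ℂ)^2 * (f : ℝ → ℂ) s ∂μm)
        * ((starRingEnd ℂ) ((g : ℝ → ℂ) x) * ((x:ℝ):ℂ)^0)
      + (-(∫ s, ((s:ℝ):ℂ) * (f : ℝ → ℂ) s ∂μm))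
        * ((starRingEnd ℂ) ((g : ℝ → ℂ) x) * ((x:ℝ):ℂ)^1))
    (g := fun x : ℝ => (2⁻¹ * ∫ s, (f : ℝ → ℂ) s ∂μm)
        * ((starRingEnd ℂ) ((g : ℝ → ℂ) x) * ((x:ℝ):ℂ)^2))
    (by exact (hm0.const_mul _).add (hm1.const_mul _)) (by exact hm2.const_mul _)
  rw [haddA]
  have haddB := integral_add (μ := volume.restrict (Set.Icc (0:ℝ) 1))
    (f := fun x : ℝ => (2⁻¹ * ∫ s, ((s:ℝ):ℂ)^2 * (f : ℝ → ℂ) s ∂μm)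
        * ((starRingEnd ℂ) ((g : ℝ → ℂ) x) * ((x:ℝ):ℂ)^0))
    (g := fun x : ℝ => (-(∫ s, ((s:ℝ):ℂ) * (f : ℝ → ℂ) s ∂μm))
        * ((starRingEnd ℂ) ((g : ℝ → ℂ) x) * ((x:ℝ):ℂ)^1))
    (by exact hm0.const_mul _) (by exact hm1.const_mul _)
  rw [haddB]
  simp only [integral_const_mul]
  rw [inner_add_right, inner_add_right, inner_smul_right, inner_smul_right, inner_smul_right]
  have hq : ∀ j : ℕ, ⟪g, q j⟫ = ∫ x, (starRingEnd ℂ) ((g : ℝ → ℂ) x) * ((x:ℝ):ℂ)^j ∂μm := by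
    intro j
    rw [inner_eq_s8]
    apply integral_congr_ae
    filter_upwards [q_coe j] with x hx
    rw [hx]
  rw [hq 0, hq 1, hq 2]
  ring

lemma pow_integrable (k : ℕ) : Integrable (fun x : ℝ => ((x:ℝ):ℂ)^k) μm :=
  (memLp_pow k).integrable (by norm_num)

lemma mom_of_ae (u : E) (c0 c1 c2 : ℂ)
    (h : (u : ℝ → ℂ) =ᵐ[μm] fun x : ℝ => c0 + c1 * ((x:ℝ):ℂ) + c2 * ((x:ℝ):ℂ)^2) (j : ℕ) :
    ∫ x, ((x:ℝ):ℂ)^j * (u : ℝ → ℂ) x ∂μm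
      = c0 / (j+1) + c1 / (j+2) + c2 / (j+3) := by
  have h1 : ∫ x, ((x:ℝ):ℂ)^j * (u : ℝ → ℂ) x ∂μm
      = ∫ x, (c0 * ((x:ℝ):ℂ)^j + c1 * ((x:ℝ):ℂ)^(j+1) + c2 * ((x:ℝ):ℂ)^(j+2)) ∂μm := by
    apply integral_congr_ae
    filter_upwards [h] with x hx
    rw [hx]
    ring
  rw [h1]
  have haddA := integral_add (μ := volume.restrict (Set.Icc (0:ℝ) 1))
    (f := fun x : ℝ => c0 * ((x:ℝ):ℂ)^j + c1 * ((x:ℝ):ℂ)^(j+1))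
    (g := fun x : ℝ => c2 * ((x:ℝ):ℂ)^(j+2))
    (by exact ((pow_integrable j).const_mul _).add ((pow_integrable (j+1)).const_mul _))
    (by exact (pow_integrable (j+2)).const_mul _)
  rw [haddA]
  have haddB := integral_add (μ := volume.restrict (Set.Icc (0:ℝ) 1))
    (f := fun x : ℝ => c0 * ((x:ℝ):ℂ)^j)
    (g := fun x : ℝ => c1 * ((x:ℝ):ℂ)^(j+1))
    (by exact (pow_integrable j).const_mul _) (by exact (pow_integrable (j+1)).const_mul _)
  rw [haddB]
  simp only [integral_const_mul]
  rw [momq j, momq (j+1), momq (j+2)]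
  push_cast
  ring

lemma combo_coe (c0 c1 c2 : ℂ) :
    (((c0 • q 0 + c1 • q 1 + c2 • q 2 : E)) : ℝ → ℂ) =ᵐ[μm]
      fun x : ℝ => c0 + c1 * ((x:ℝ):ℂ) + c2 * ((x:ℝ):ℂ)^2 := by
  filter_upwards [Lp.coeFn_add (c0 • q 0 + c1 • q 1) (c2 • q 2),
    Lp.coeFn_add (c0 • q 0) (c1 • q 1), Lp.coeFn_smul c0 (q 0), Lp.coeFn_smul c1 (q 1),
    Lp.coeFn_smul c2 (q 2), q_coe 0, q_coe 1, q_coe 2] with x h1 h2 h3 h4 h5 h6 h7 h8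
  rw [h1, Pi.add_apply, h2, Pi.add_apply, h3, h4, h5, Pi.smul_apply, Pi.smul_apply,
    Pi.smul_apply, h6, h7, h8]
  simp only [smul_eq_mul]
  ring

lemma eigen_system (V : E →L[ℂ] E) (hV : IsVolterra V) (μ : ℂ) (hμ : μ ≠ 0) (u : E) (hu : u ≠ 0)
    (heq : ((2:ℂ)⁻¹ • (V ^ 3 + ContinuousLinearMap.adjoint (V ^ 3)) : E →L[ℂ] E) u = μ • u) :
    ∃ A B C : ℂ, ¬(A = 0 ∧ B = 0 ∧ C = 0)
      ∧ μ * A = C/4 - B/4 + A/12 ∧ μ * B = C/8 - B/6 + A/16 ∧ μ * C = C/12 - B/8 + A/20 := by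
  set A := ∫ x, (u : ℝ → ℂ) x ∂μm with hA
  set B := ∫ x, ((x:ℝ):ℂ) * (u : ℝ → ℂ) x ∂μm with hB
  set C := ∫ x, ((x:ℝ):ℂ)^2 * (u : ℝ → ℂ) x ∂μm with hC
  have hk := key_s8 V hV u
  rw [heq] at hk
  -- u = μ⁻¹ • combo
  have hu' : u = (μ⁻¹ * ((4:ℂ)⁻¹ * C)) • q 0 + (μ⁻¹ * (-((2:ℂ)⁻¹) * B)) • q 1
      + (μ⁻¹ * ((4:ℂ)⁻¹ * A)) • q 2 := by
    have : u = μ⁻¹ • (μ • u) := by rw [smul_smul, inv_mul_cancel₀ hμ, one_smul]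
    rw [this, hk, smul_add, smul_add, smul_smul, smul_smul, smul_smul]
  have hucoe : (u : ℝ → ℂ) =ᵐ[μm] fun x : ℝ => (μ⁻¹ * ((4:ℂ)⁻¹ * C))
      + (μ⁻¹ * (-((2:ℂ)⁻¹) * B)) * ((x:ℝ):ℂ) + (μ⁻¹ * ((4:ℂ)⁻¹ * A)) * ((x:ℝ):ℂ)^2 := by
    rw [hu']
    exact combo_coe _ _ _
  have hm := fun j => mom_of_ae u _ _ _ hucoe j
  have hm0 := hm 0
  have hm1 := hm 1
  have hm2 := hm 2
  have hA0 : ∫ x, ((x:ℝ):ℂ)^0 * (u : ℝ → ℂ) x ∂μm = A := by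
    rw [hA]; apply integral_congr_ae; filter_upwards with x; rw [pow_zero, one_mul]
  have hB1 : ∫ x, ((x:ℝ):ℂ)^1 * (u : ℝ → ℂ) x ∂μm = B := by
    rw [hB]; apply integral_congr_ae; filter_upwards with x; rw [pow_one]
  rw [hA0] at hm0
  rw [hB1] at hm1
  rw [← hC] at hm2
  refine ⟨A, B, C, ?_, ?_, ?_, ?_⟩
  · rintro ⟨h1, h2, h3⟩
    apply hu
    rw [hu', h1, h2, h3]
    simp
  · have hinv : μ * μ⁻¹ = 1 := mul_inv_cancel₀ hμ
    norm_num at hm0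
    linear_combination μ * hm0 + (C/4 - B/4 + A/12) * hinv
  · have hinv : μ * μ⁻¹ = 1 := mul_inv_cancel₀ hμ
    norm_num at hm1
    linear_combination μ * hm1 + (C/8 - B/6 + A/16) * hinv
  · have hinv : μ * μ⁻¹ = 1 := mul_inv_cancel₀ hμ
    norm_num at hm2
    linear_combination μ * hm2 + (C/12 - B/8 + A/20) * hinv

lemma eigen_build (V : E →L[ℂ] E) (hV : IsVolterra V) (μ : ℂ) (hμ : μ ≠ 0) (A B C : ℂ)
    (hABC : ¬(A = 0 ∧ B = 0 ∧ C = 0))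
    (e0 : μ * A = C/4 - B/4 + A/12) (e1 : μ * B = C/8 - B/6 + A/16)
    (e2 : μ * C = C/12 - B/8 + A/20) :
    Module.End.HasEigenvalue
      (((2:ℂ)⁻¹ • (V ^ 3 + ContinuousLinearMap.adjoint (V ^ 3)) : E →L[ℂ] E) : E →ₗ[ℂ] E) μ := by
  set u : E := (μ⁻¹ * (C/4)) • q 0 + (μ⁻¹ * (-(B/2))) • q 1 + (μ⁻¹ * (A/4)) • q 2 with hu
  have hucoe : (u : ℝ → ℂ) =ᵐ[μm] fun x : ℝ => (μ⁻¹ * (C/4))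
      + (μ⁻¹ * (-(B/2))) * ((x:ℝ):ℂ) + (μ⁻¹ * (A/4)) * ((x:ℝ):ℂ)^2 := combo_coe _ _ _
  have hm := fun j => mom_of_ae u _ _ _ hucoe j
  have hinv : μ * μ⁻¹ = 1 := mul_inv_cancel₀ hμ
  have hmA : ∫ x, (u : ℝ → ℂ) x ∂μm = A := by
    have h0 : ∫ x, (u : ℝ → ℂ) x ∂μm = ∫ x, ((x:ℝ):ℂ)^0 * (u : ℝ → ℂ) x ∂μm := by
      apply integral_congr_ae; filter_upwards with x; rw [pow_zero, one_mul]
    rw [h0, hm 0]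
    norm_num
    linear_combination (-μ⁻¹) * e0 + A * hinv
  have hmB : ∫ x, ((x:ℝ):ℂ) * (u : ℝ → ℂ) x ∂μm = B := by
    have h0 : ∫ x, ((x:ℝ):ℂ) * (u : ℝ → ℂ) x ∂μm
        = ∫ x, ((x:ℝ):ℂ)^1 * (u : ℝ → ℂ) x ∂μm := by
      apply integral_congr_ae; filter_upwards with x; rw [pow_one]
    rw [h0, hm 1]
    norm_num
    linear_combination (-μ⁻¹) * e1 + B * hinv
  have hmC : ∫ x, ((x:ℝ):ℂ)^2 * (u : ℝ → ℂ) x ∂μm = C := by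
    rw [hm 2]
    norm_num
    linear_combination (-μ⁻¹) * e2 + C * hinv
  have hk := key_s8 V hV u
  rw [hmA, hmB, hmC] at hk
  have hTu : ((2:ℂ)⁻¹ • (V ^ 3 + ContinuousLinearMap.adjoint (V ^ 3)) : E →L[ℂ] E) u = μ • u := by
    have c0eq : μ * (μ⁻¹ * (C/4)) = (4:ℂ)⁻¹ * C := by
      rw [← mul_assoc, hinv, one_mul]; ring
    have c1eq : μ * (μ⁻¹ * (-(B/2))) = -((2:ℂ)⁻¹) * B := by
      rw [← mul_assoc, hinv, one_mul]; ring
    have c2eq : μ * (μ⁻¹ * (A/4)) = (4:ℂ)⁻¹ * A := by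
      rw [← mul_assoc, hinv, one_mul]; ring
    rw [hk, hu, smul_add, smul_add, smul_smul, smul_smul, smul_smul, c0eq, c1eq, c2eq]
  have hu0 : u ≠ 0 := by
    intro h
    apply hABC
    have hcoe0 : (u : ℝ → ℂ) =ᵐ[μm] 0 := by rw [h]; exact Lp.coeFn_zero _ _ _
    have hz : ∀ k : ℕ, (∫ x, ((x:ℝ):ℂ)^k * (u : ℝ → ℂ) x ∂μm) = 0 := by
      intro k
      rw [integral_congr_ae (g := fun _ => (0:ℂ))]
      · simp
      · filter_upwards [hcoe0] with x hx
        rw [hx]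
        simp
    refine ⟨?_, ?_, ?_⟩
    · rw [← hmA]
      have h0 : ∫ x, (u : ℝ → ℂ) x ∂μm = ∫ x, ((x:ℝ):ℂ)^0 * (u : ℝ → ℂ) x ∂μm := by
        apply integral_congr_ae; filter_upwards with x; rw [pow_zero, one_mul]
      rw [h0, hz 0]
    · rw [← hmB]
      have h0 : ∫ x, ((x:ℝ):ℂ) * (u : ℝ → ℂ) x ∂μm
          = ∫ x, ((x:ℝ):ℂ)^1 * (u : ℝ → ℂ) x ∂μm := by
        apply integral_congr_ae; filter_upwards with x; rw [pow_one]
      rw [h0, hz 1]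
    · rw [← hmC, hz 2]
  exact Module.End.hasEigenvalue_of_hasEigenvector
    ⟨Module.End.mem_eigenspace_iff.2 (by exact hTu), hu0⟩


theorem re_volterra_cube_eigenvalues (V : E →L[ℂ] E) (hV : IsVolterra V) :
    {μ : ℂ | μ ≠ 0 ∧ Module.End.HasEigenvalue
        (((2:ℂ)⁻¹ • (V ^ 3 + ContinuousLinearMap.adjoint (V ^ 3)) : E →L[ℂ] E) : E →ₗ[ℂ] E) μ} =
      {((-1/24 : ℝ) : ℂ), ((1/48 + Real.sqrt 5 / 80 : ℝ) : ℂ), ((1/48 - Real.sqrt 5 / 80 : ℝ) : ℂ)} := by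
  have h5 : ((Real.sqrt 5 : ℝ) : ℂ)^2 = 5 := by
    rw [← Complex.ofReal_pow, Real.sq_sqrt (by norm_num : (0:ℝ) ≤ 5)]
    norm_num
  have hs3 : Real.sqrt 5 < 3 := by
    nlinarith [Real.sq_sqrt (show (0:ℝ) ≤ 5 by norm_num), Real.sqrt_nonneg 5]
  have hs0 : (0:ℝ) ≤ Real.sqrt 5 := Real.sqrt_nonneg 5
  ext μ
  simp only [Set.mem_setOf_eq, Set.mem_insert_iff, Set.mem_singleton_iff]
  constructor
  · rintro ⟨hμ0, hμ⟩
    obtain ⟨u, hu⟩ := hμ.exists_hasEigenvector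
    have hTu : ((2:ℂ)⁻¹ • (V ^ 3 + ContinuousLinearMap.adjoint (V ^ 3)) : E →L[ℂ] E) u
        = μ • u := by exact Module.End.mem_eigenspace_iff.1 hu.1
    obtain ⟨A, B, C, hABC, e0, e1, e2⟩ := eigen_system V hV μ hμ0 u hu.2 hTu
    have hDA : (μ^3 - μ/480 - 1/69120) * A = 0 := by
      linear_combination ((μ+1/6)*(μ-1/12)+1/64) * e0 + (-((μ-1/12)/4+1/32)) * e1
        + ((μ+1/6)/4 - 1/32) * e2
    have hDB : (μ^3 - μ/480 - 1/69120) * B = 0 := by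
      linear_combination ((μ-1/12)/16 + 1/160) * e0 + ((μ-1/12)^2 - 1/80) * e1
        + ((μ-1/12)/8 + 1/64) * e2
    have hDC : (μ^3 - μ/480 - 1/69120) * C = 0 := by
      linear_combination ((μ+1/6)/20 - 1/128) * e0 + (-((μ-1/12)/8 + 1/80)) * e1
        + ((μ-1/12)*(μ+1/6) + 1/64) * e2
    have hD : μ^3 - μ/480 - 1/69120 = 0 := by
      by_contra hD0
      exact hABC ⟨(mul_eq_zero.1 hDA).resolve_left hD0,
        (mul_eq_zero.1 hDB).resolve_left hD0, (mul_eq_zero.1 hDC).resolve_left hD0⟩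
    have hcube : μ^3 = μ/480 + 1/69120 := by linear_combination hD
    have hfac : (μ - ((-1/24 : ℝ) : ℂ)) * (μ - ((1/48 + Real.sqrt 5 / 80 : ℝ) : ℂ))
        * (μ - ((1/48 - Real.sqrt 5 / 80 : ℝ) : ℂ)) = 0 := by
      push_cast
      linear_combination hcube - ((μ + 1/24)/6400) * h5
    rcases mul_eq_zero.1 hfac with h12 | h3
    · rcases mul_eq_zero.1 h12 with h1 | h2
      · exact Or.inl (sub_eq_zero.1 h1)
      · exact Or.inr (Or.inl (sub_eq_zero.1 h2))
    · exact Or.inr (Or.inr (sub_eq_zero.1 h3))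
  · intro h
    rcases h with h | h | h
    · subst h
      refine ⟨by rw [Ne, Complex.ofReal_eq_zero]; norm_num, ?_⟩
      apply eigen_build V hV _ (by rw [Ne, Complex.ofReal_eq_zero]; norm_num) 0 1 1
      · rintro ⟨-, h2, -⟩; exact one_ne_zero h2
      · push_cast; ring
      · push_cast; norm_num
      · push_cast; norm_num
    · subst h
      have hne : ((1/48 + Real.sqrt 5 / 80 : ℝ) : ℂ) ≠ 0 := by
        rw [Ne, Complex.ofReal_eq_zero]
        positivity
      refine ⟨hne, ?_⟩
      set μc : ℂ := ((1/48 + Real.sqrt 5 / 80 : ℝ) : ℂ) with hμc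
      have hμc' : μc = 1/48 + ((Real.sqrt 5 : ℝ) : ℂ)/80 := by rw [hμc]; push_cast; ring
      have hcube : μc^3 = μc/480 + 1/69120 := by
        rw [hμc']
        linear_combination (((Real.sqrt 5 : ℝ) : ℂ)/512000 + 1/102400) * h5
      apply eigen_build V hV _ hne (1/96 + μc/4) (1/192 + μc/8) (μc^2 + μc/12 + 1/576)
      · rintro ⟨h1, -, -⟩
        rw [hμc'] at h1
        have h2 : ((1/96 + (1/48 + Real.sqrt 5/80)/4 : ℝ) : ℂ) = 0 := by
          push_cast
          linear_combination h1
        have h3 := Complex.ofReal_eq_zero.1 h2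
        nlinarith
      · ring
      · ring
      · linear_combination hcube
    · subst h
      have hne : ((1/48 - Real.sqrt 5 / 80 : ℝ) : ℂ) ≠ 0 := by
        rw [Ne, Complex.ofReal_eq_zero]
        intro h0
        have hs : Real.sqrt 5 = 5/3 := by linarith
        have h5r := Real.sq_sqrt (show (0:ℝ) ≤ 5 by norm_num)
        rw [hs] at h5r
        norm_num at h5r
      refine ⟨hne, ?_⟩
      set μc : ℂ := ((1/48 - Real.sqrt 5 / 80 : ℝ) : ℂ) with hμc
      have hμc' : μc = 1/48 - ((Real.sqrt 5 : ℝ) : ℂ)/80 := by rw [hμc]; push_cast; ring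
      have hcube : μc^3 = μc/480 + 1/69120 := by
        rw [hμc']
        linear_combination (-((Real.sqrt 5 : ℝ) : ℂ)/512000 + 1/102400) * h5
      apply eigen_build V hV _ hne (1/96 + μc/4) (1/192 + μc/8) (μc^2 + μc/12 + 1/576)
      · rintro ⟨h1, -, -⟩
        rw [hμc'] at h1
        have h2 : ((1/96 + (1/48 - Real.sqrt 5/80)/4 : ℝ) : ℂ) = 0 := by
          push_cast
          linear_combination h1
        have h3 := Complex.ofReal_eq_zero.1 h2
        nlinarith
      · ring
      · ring
      · linear_combination hcube
end
end

section
/- For every n ≥ 1 and f(x) = 1 − 2x, the quadratic form of Re Vⁿ satisfies ⟨(Re Vⁿ)f, f⟩ = −(n−1)/((n+3)·(n+1)!); in particular, for n ≥ 2 the numerical range of Vⁿ contains points with strictly negative real part, so Vⁿ is neither accretive nor dissipative. -/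
open MeasureTheory Complex ContinuousLinearMap

noncomputable section

-- step lemma
lemma volterra_step (V : E →L[ℂ] E) (hV : IsVolterra V) (g : E) (q : ℝ → ℝ)
    (hg : (g : ℝ → ℂ) =ᵐ[volume.restrict (Set.Icc (0:ℝ) 1)] fun x => ((q x : ℝ) : ℂ)) :
    (V g : ℝ → ℂ) =ᵐ[volume.restrict (Set.Icc (0:ℝ) 1)]
      fun x => ((∫ t in (0:ℝ)..x, q t : ℝ) : ℂ) := by
  have h2 : ∀ᵐ x ∂volume, x ∈ Set.Icc (0:ℝ) 1 → (g : ℝ → ℂ) x = ((q x : ℝ):ℂ) :=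
    (ae_restrict_iff' measurableSet_Icc).mp hg
  filter_upwards [hV g, ae_restrict_mem measurableSet_Icc] with x hx hxmem
  rw [hx]
  have hcong : ∀ᵐ t ∂volume, t ∈ Set.uIoc (0:ℝ) x → (g : ℝ → ℂ) t = ((q t : ℝ):ℂ) := by
    filter_upwards [h2] with t ht htmem
    rw [Set.uIoc_of_le hxmem.1] at htmem
    exact ht ⟨le_of_lt htmem.1, htmem.2.trans hxmem.2⟩
  rw [intervalIntegral.integral_congr_ae hcong, intervalIntegral.integral_ofReal]

def Q (k : ℕ) (x : ℝ) : ℝ := x ^ k / (k.factorial : ℝ) - 2 * x ^ (k+1) / ((k+1).factorial : ℝ)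

lemma Q_cont (k : ℕ) : Continuous (Q k) := by unfold Q; fun_prop

lemma Q_int (k : ℕ) (x : ℝ) : ∫ t in (0:ℝ)..x, Q k t = Q (k+1) x := by
  have c1 : Continuous fun t : ℝ => t ^ k / (k.factorial : ℝ) := by fun_prop
  have c2 : Continuous fun t : ℝ => 2 * t ^ (k+1) / ((k+1).factorial : ℝ) := by fun_prop
  unfold Q
  rw [intervalIntegral.integral_sub (c1.intervalIntegrable _ _) (c2.intervalIntegrable _ _)]
  simp only [mul_div_assoc, intervalIntegral.integral_div, intervalIntegral.integral_const_mul,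
    integral_pow]
  have hk : ((k.factorial : ℝ)) ≠ 0 := Nat.cast_ne_zero.mpr k.factorial_pos.ne'
  have hk1 : (((k+1).factorial : ℝ)) ≠ 0 := Nat.cast_ne_zero.mpr (k+1).factorial_pos.ne'
  have hk2 : (((k+2).factorial : ℝ)) ≠ 0 := Nat.cast_ne_zero.mpr (k+2).factorial_pos.ne'
  have e1 : ((k+1).factorial : ℝ) = (k+1) * (k.factorial : ℝ) := by
    rw [Nat.factorial_succ]; push_cast; ring
  have e2 : ((k+2).factorial : ℝ) = (k+2) * ((k+1).factorial : ℝ) := by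
    rw [show k+2 = (k+1)+1 from rfl, Nat.factorial_succ]; push_cast; ring
  have hkk : ((k:ℝ)+1) ≠ 0 := by positivity
  have hkk2 : ((k:ℝ)+2) ≠ 0 := by positivity
  field_simp
  rw [e1, e2, e1]
  push_cast
  ring

lemma pow_rep (V : E →L[ℂ] E) (hV : IsVolterra V) (f : E)
    (hf : (f : ℝ → ℂ) =ᵐ[volume.restrict (Set.Icc (0:ℝ) 1)] fun x => 1 - 2 * (x : ℂ)) (k : ℕ) :
    ((V ^ k) f : ℝ → ℂ) =ᵐ[volume.restrict (Set.Icc (0:ℝ) 1)] fun x => ((Q k x : ℝ) : ℂ) := by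
  induction k with
  | zero =>
    simp only [pow_zero, one_apply]
    refine hf.trans (Filter.EventuallyEq.of_eq ?_)
    funext x; simp [Q]
  | succ k ih =>
    have : (V ^ (k+1)) f = V ((V ^ k) f) := by rw [pow_succ']; rfl
    rw [this]
    have := volterra_step V hV ((V ^ k) f) (Q k) ih
    refine this.trans (Filter.EventuallyEq.of_eq ?_)
    funext x; rw [Q_int]

lemma inner_rep (g h : E) (a b : ℝ → ℝ)
    (hg : (g : ℝ → ℂ) =ᵐ[volume.restrict (Set.Icc (0:ℝ) 1)] fun x => ((a x : ℝ) : ℂ))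
    (hh : (h : ℝ → ℂ) =ᵐ[volume.restrict (Set.Icc (0:ℝ) 1)] fun x => ((b x : ℝ) : ℂ)) :
    (inner ℂ g h : ℂ) = ((∫ x in Set.Icc (0:ℝ) 1, a x * b x : ℝ) : ℂ) := by
  rw [MeasureTheory.L2.inner_def]
  have key : (fun x => (inner ℂ ((g : ℝ → ℂ) x) ((h : ℝ → ℂ) x) : ℂ))
      =ᵐ[volume.restrict (Set.Icc (0:ℝ) 1)] fun x => ((a x * b x : ℝ) : ℂ) := by
    filter_upwards [hg, hh] with x h1 h2
    simp [h1, h2, RCLike.inner_apply, Complex.conj_ofReal, Complex.ofReal_mul, mul_comm]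
  rw [integral_congr_ae key]
  exact integral_ofReal

lemma main_integral (n : ℕ) :
    ∫ x in (0:ℝ)..1, Q n x * Q 0 x
      = -(((n:ℝ) - 1) / (((n:ℝ) + 3) * ((n+1).factorial : ℝ))) := by
  have hk : ((n.factorial : ℝ)) ≠ 0 := Nat.cast_ne_zero.mpr n.factorial_pos.ne'
  have e1 : ((n+1).factorial : ℝ) = ((n:ℝ)+1) * (n.factorial : ℝ) := by
    rw [Nat.factorial_succ]; push_cast; ring
  have e : (fun x : ℝ => Q n x * Q 0 x) = fun x =>
      (1/(n.factorial:ℝ)) * x^n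
      - (2/(n.factorial:ℝ) + 2/((n+1).factorial:ℝ)) * x^(n+1)
      + (4/((n+1).factorial:ℝ)) * x^(n+2) := by
    funext x; unfold Q
    simp only [Nat.factorial_zero, Nat.factorial_one, pow_zero, pow_one, Nat.cast_one, e1]
    field_simp
    ring
  rw [e]
  have c1 : Continuous fun x : ℝ => (1/(n.factorial:ℝ)) * x^n := by fun_prop
  have c2 : Continuous fun x : ℝ =>
      (2/(n.factorial:ℝ) + 2/((n+1).factorial:ℝ)) * x^(n+1) := by fun_prop
  have c3 : Continuous fun x : ℝ => (4/((n+1).factorial:ℝ)) * x^(n+2) := by fun_prop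
  rw [intervalIntegral.integral_add ((c1.intervalIntegrable _ _).sub (c2.intervalIntegrable _ _))
    (c3.intervalIntegrable _ _),
    intervalIntegral.integral_sub (c1.intervalIntegrable _ _) (c2.intervalIntegrable _ _)]
  simp only [intervalIntegral.integral_const_mul, integral_pow, one_pow, zero_pow, e1]
  have h1 : ((n:ℝ)+1) ≠ 0 := by positivity
  have h2 : ((n:ℝ)+2) ≠ 0 := by positivity
  have h3 : ((n:ℝ)+3) ≠ 0 := by positivity
  push_cast
  field_simp
  ring

lemma R_int (k : ℕ) (x : ℝ) :
    ∫ t in (0:ℝ)..x, t^k / (k.factorial : ℝ) = x^(k+1) / ((k+1).factorial : ℝ) := by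
  have hk : ((k.factorial : ℝ)) ≠ 0 := Nat.cast_ne_zero.mpr k.factorial_pos.ne'
  have e1 : ((k+1).factorial : ℝ) = ((k:ℝ)+1) * (k.factorial : ℝ) := by
    rw [Nat.factorial_succ]; push_cast; ring
  have h1 : ((k:ℝ)+1) ≠ 0 := by positivity
  rw [intervalIntegral.integral_div, integral_pow, e1]
  push_cast
  field_simp
  simp

lemma pow_rep_one (V : E →L[ℂ] E) (hV : IsVolterra V) (g : E)
    (hg : (g : ℝ → ℂ) =ᵐ[volume.restrict (Set.Icc (0:ℝ) 1)] fun _ => (1:ℂ)) (k : ℕ) :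
    ((V ^ k) g : ℝ → ℂ) =ᵐ[volume.restrict (Set.Icc (0:ℝ) 1)]
      fun x => ((x^k / (k.factorial : ℝ) : ℝ) : ℂ) := by
  induction k with
  | zero =>
    simp only [pow_zero, one_apply]
    refine hg.trans (Filter.EventuallyEq.of_eq ?_)
    funext x; simp
  | succ k ih =>
    have h : (V ^ (k+1)) g = V ((V ^ k) g) := by rw [pow_succ']; rfl
    rw [h]
    have := volterra_step V hV ((V ^ k) g) (fun t => t^k / (k.factorial : ℝ)) ih
    refine this.trans (Filter.EventuallyEq.of_eq ?_)
    funext x; rw [R_int]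

theorem re_pow_quadratic_form (V : E →L[ℂ] E) (hV : IsVolterra V) (n : ℕ) (hn : 1 ≤ n)
    (f : E) (hf : (f : ℝ → ℂ) =ᵐ[volume.restrict (Set.Icc (0:ℝ) 1)] fun x => 1 - 2 * (x : ℂ)) :
    (inner ℂ (((2:ℂ)⁻¹ • (V ^ n + ContinuousLinearMap.adjoint (V ^ n))) f) f : ℂ) =
      -(((n : ℂ) - 1) / (((n : ℂ) + 3) * (Nat.factorial (n + 1)))) ∧
    (2 ≤ n →
      (∃ g : E, (inner ℂ ((V ^ n) g) g : ℂ).re < 0) ∧ (∃ g : E, 0 < (inner ℂ ((V ^ n) g) g : ℂ).re)) := by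
  have hrepn := pow_rep V hV f hf n
  have hrep0 : (f : ℝ → ℂ) =ᵐ[volume.restrict (Set.Icc (0:ℝ) 1)]
      fun x => ((Q 0 x : ℝ) : ℂ) := by
    refine hf.trans (Filter.EventuallyEq.of_eq ?_)
    funext x; simp [Q]
  set c : ℝ := -(((n:ℝ) - 1) / (((n:ℝ) + 3) * ((n+1).factorial : ℝ))) with hc
  have hval : (inner ℂ ((V ^ n) f) f : ℂ) = (c : ℂ) := by
    rw [inner_rep ((V ^ n) f) f (Q n) (Q 0) hrepn hrep0,
      MeasureTheory.integral_Icc_eq_integral_Ioc,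
      ← intervalIntegral.integral_of_le zero_le_one, main_integral]
  have hcast : ((c : ℝ) : ℂ) = -(((n : ℂ) - 1) / (((n : ℂ) + 3) * (Nat.factorial (n + 1)))) := by
    rw [hc]; push_cast; ring
  constructor
  · have h2 : (((2:ℂ)⁻¹ • (V ^ n + ContinuousLinearMap.adjoint (V ^ n))) f)
        = (2:ℂ)⁻¹ • ((V ^ n) f + (ContinuousLinearMap.adjoint (V ^ n)) f) := rfl
    rw [h2, inner_smul_left, inner_add_left, adjoint_inner_left, ← inner_conj_symm f ((V ^ n) f),
      hval, Complex.conj_ofReal, ← hcast]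
    have : (starRingEnd ℂ) (2:ℂ)⁻¹ = (2:ℂ)⁻¹ := by
      rw [map_inv₀, Complex.conj_ofNat]
    rw [this]
    ring
  · intro hn2
    constructor
    · refine ⟨f, ?_⟩
      rw [hval, Complex.ofReal_re, hc]
      have hn2' : (2:ℝ) ≤ (n:ℝ) := by exact_mod_cast hn2
      have hpos : 0 < ((n:ℝ) - 1) / (((n:ℝ) + 3) * ((n+1).factorial : ℝ)) := by
        apply div_pos (by linarith)
        positivity
      linarith
    · haveI : IsFiniteMeasure (volume.restrict (Set.Icc (0:ℝ) 1)) :=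
        ⟨by rw [Measure.restrict_apply_univ]; exact measure_Icc_lt_top⟩
      set g : E := (memLp_const (1:ℂ)).toLp _ with hgdef
      have hg : (g : ℝ → ℂ) =ᵐ[volume.restrict (Set.Icc (0:ℝ) 1)] fun _ => (1:ℂ) :=
        MemLp.coeFn_toLp _
      refine ⟨g, ?_⟩
      have hrepg := pow_rep_one V hV g hg n
      have hrepg0 : (g : ℝ → ℂ) =ᵐ[volume.restrict (Set.Icc (0:ℝ) 1)]
          fun x => ((x^0 / ((Nat.factorial 0 : ℕ) : ℝ) : ℝ) : ℂ) := by
        refine hg.trans (Filter.EventuallyEq.of_eq ?_)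
        funext x; simp
      have hvg : (inner ℂ ((V ^ n) g) g : ℂ)
          = ((∫ x in Set.Icc (0:ℝ) 1, (x^n / (n.factorial : ℝ)) * (x^0 / ((Nat.factorial 0 : ℕ) : ℝ)) : ℝ) : ℂ) :=
        inner_rep _ _ _ _ hrepg hrepg0
      have hsimp : ∫ x in Set.Icc (0:ℝ) 1, (x^n / (n.factorial : ℝ)) * (x^0 / ((Nat.factorial 0 : ℕ) : ℝ))
          = 1 / ((n+1).factorial : ℝ) := by
        have : (fun x : ℝ => (x^n / (n.factorial : ℝ)) * (x^0 / ((Nat.factorial 0 : ℕ) : ℝ)))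
            = fun x : ℝ => x^n / (n.factorial : ℝ) := by
          funext x; simp
        rw [this, MeasureTheory.integral_Icc_eq_integral_Ioc,
          ← intervalIntegral.integral_of_le zero_le_one, R_int]
        simp
      rw [hvg, hsimp, Complex.ofReal_re]
      positivity
end
end
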